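/- arXiv:1801.09532 — 13 statements merged into one kernel-verified Lean document; each statement's English description precedes it below -/
import Mathlib

section
/- Let A and B both be phased coproducts of a family of objects (A_i)_{i∈I} in a category, with coprojections κ_i : A_i → A and μ_i : A_i → B respectively. Then any morphism f : A → B satisfying f ∘ κ_i = μ_i for all i ∈ I is an isomorphism. -/
open CategoryTheory CategoryTheory.Limits

universe v u

variable {C : Type u} [Category.{v} C]

/-- Phased coproduct of a family of objects: (i) every cocone factors through `P`;
(ii) any two factorizations differ by a *phase*, i.e. an endomorphism of `P`
preserving all the coprojections. -/
structure IsPhasedCoproduct {ι : Type*} (A : ι → C) (P : C) (κ : ∀ i, A i ⟶ P) : Prop where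
  lift : ∀ {D : C} (f : ∀ i, A i ⟶ D), ∃ h : P ⟶ D, ∀ i, κ i ≫ h = f i
  phase : ∀ {D : C} (h h' : P ⟶ D), (∀ i, κ i ≫ h = κ i ≫ h') →
    ∃ U : P ⟶ P, (∀ i, κ i ≫ U = κ i) ∧ h' = U ≫ h

/-- Every phase of a phased coproduct is an isomorphism. -/
theorem IsPhasedCoproduct.isIso_phase {ι : Type*} {A : ι → C} {P : C} {κ : ∀ i, A i ⟶ P}
    (hP : IsPhasedCoproduct A P κ) (U : P ⟶ P) (hU : ∀ i, κ i ≫ U = κ i) : IsIso U := by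
  obtain ⟨V, hV, hVU⟩ := hP.phase U (𝟙 P) (by simpa using hU)
  obtain ⟨W, hW, hWV⟩ := hP.phase V (𝟙 P) (by simpa using hV)
  refine ⟨V, ?_, hVU.symm⟩
  have : U = W := by
    calc U = 𝟙 P ≫ U := by simp
    _ = (W ≫ V) ≫ U := by rw [← hWV]
    _ = W ≫ (V ≫ U) := by simp
    _ = W := by rw [← hVU]; simp
  rw [this, ← hWV]

/-- a morphism between two phased coproducts of the same family that
commutes with the coprojections is an isomorphism. -/
theorem stmt_0 {ι : Type*} (A : ι → C) (P Q : C) (κ : ∀ i, A i ⟶ P) (μ : ∀ i, A i ⟶ Q)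
    (hP : IsPhasedCoproduct A P κ) (hQ : IsPhasedCoproduct A Q μ)
    (f : P ⟶ Q) (hf : ∀ i, κ i ≫ f = μ i) : IsIso f := by
  obtain ⟨g, hg⟩ := hQ.lift κ
  have h1 : IsIso (f ≫ g) :=
    hP.isIso_phase _ (fun i => by rw [← Category.assoc, hf, hg])
  have h2 : IsIso (g ≫ f) :=
    hQ.isIso_phase _ (fun i => by rw [← Category.assoc, hg, hf])
  refine ⟨g ≫ inv (f ≫ g), by rw [← Category.assoc, IsIso.hom_inv_id], ?_⟩
  have key : inv (f ≫ g) ≫ f = f ≫ inv (g ≫ f) := by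
    rw [IsIso.inv_comp_eq]
    simp [← Category.assoc]
  rw [Category.assoc, key, ← Category.assoc, IsIso.hom_inv_id]
end

section
/- Let P, with coprojections κ_i : A_i → P, be a phased coproduct of a family of objects (A_i)_{i∈I} in a category. Then every phase of P, i.e. every endomorphism U : P → P with U ∘ κ_i = κ_i for all i, is an isomorphism. -/
open CategoryTheory CategoryTheory.Limits

universe v u

variable {C : Type u} [Category.{v} C]

/-- every phase of a phased coproduct is an isomorphism. -/
theorem stmt_2 {ι : Type*} (A : ι → C) (P : C) (κ : ∀ i, A i ⟶ P)
    (hP : IsPhasedCoproduct A P κ) (U : P ⟶ P) (hU : ∀ i, κ i ≫ U = κ i) :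
    IsIso U := by
  obtain ⟨V, hV, hVU⟩ := hP.phase U (𝟙 P) (fun i => by simp [hU i])
  obtain ⟨W, hW, hWV⟩ := hP.phase V (𝟙 P) (fun i => by simp [hV i])
  have hUW : U = W := by
    calc U = (W ≫ V) ≫ U := by rw [← hWV]; simp
    _ = W := by rw [Category.assoc, ← hVU]; simp
  exact ⟨V, by rw [hUW, ← hWV], hVU.symm⟩
end

section
/- Let C be a category in which every pair of objects has a phased coproduct. Then any phased initial object of C is an initial object. -/
open CategoryTheory CategoryTheory.Limits

universe v u

variable {C : Type u} [Category.{v} C]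

/-- Binary phased coproduct: (i) every pair of morphisms factors through `P`;
(ii) any two factorizations differ by a *phase*, i.e. an endomorphism of `P`
preserving both coprojections. -/
structure IsPhasedCoproduct₂ (A B P : C) (κA : A ⟶ P) (κB : B ⟶ P) : Prop where
  lift : ∀ {D : C} (f : A ⟶ D) (g : B ⟶ D), ∃ h : P ⟶ D, κA ≫ h = f ∧ κB ≫ h = g
  phase : ∀ {D : C} (h h' : P ⟶ D), κA ≫ h = κA ≫ h' → κB ≫ h = κB ≫ h' →
    ∃ U : P ⟶ P, (κA ≫ U = κA ∧ κB ≫ U = κB) ∧ h' = U ≫ h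

/-- Phased initial object: every object receives a morphism, and any two such
morphisms differ by an endomorphism of `Z`. -/
structure IsPhasedInitial (Z : C) : Prop where
  exists_hom : ∀ A : C, Nonempty (Z ⟶ A)
  phase : ∀ {A : C} (a b : Z ⟶ A), ∃ U : Z ⟶ Z, b = U ≫ a

/-- The category has phased coproducts of every pair of objects. -/
def HasPhasedCoproducts₂ (C : Type u) [Category.{v} C] : Prop :=
  ∀ A B : C, ∃ (P : C) (κA : A ⟶ P) (κB : B ⟶ P), IsPhasedCoproduct₂ A B P κA κB

/-- in a category with binary phased coproducts, any phased initial
object is an initial object. -/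
theorem stmt_3 (hC : HasPhasedCoproducts₂ C) (Z : C) (hZ : IsPhasedInitial Z) :
    Nonempty (IsInitial Z) := by
  -- Take a phased coproduct `P = Z +̇ Z`.
  obtain ⟨P, κ₁, κ₂, hP⟩ := hC Z Z
  -- The two injections differ by an endomorphism `V` of `Z`.
  obtain ⟨V, hV⟩ := hZ.phase κ₁ κ₂
  -- Key: any two morphisms `f g : Z ⟶ A` are equal.
  have uniq : ∀ {A : C} (f g : Z ⟶ A), f = g := by
    intro A f g
    -- `V` acts trivially: lift the pair `(f, f)`.
    have hVf : V ≫ f = f := by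
      obtain ⟨h₀, h₀1, h₀2⟩ := hP.lift f f
      calc V ≫ f = V ≫ κ₁ ≫ h₀ := by rw [h₀1]
        _ = κ₂ ≫ h₀ := by rw [← Category.assoc, ← hV]
        _ = f := h₀2
    -- Lift the pair `(f, g)`.
    obtain ⟨h, h1, h2⟩ := hP.lift f g
    calc f = V ≫ f := hVf.symm
      _ = V ≫ κ₁ ≫ h := by rw [h1]
      _ = κ₂ ≫ h := by rw [← Category.assoc, ← hV]
      _ = g := h2
  exact ⟨IsInitial.ofUniqueHom (fun A => (hZ.exists_hom A).some)
    (fun A m => uniq m _)⟩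
end

section
/- Let C be a category in which every pair of objects has a phased coproduct, let 0 be a phased initial object of C, and let A +̇ 0 be a phased coproduct of an object A with 0. Then the coprojection κ_A : A → A +̇ 0 is an isomorphism. -/
open CategoryTheory CategoryTheory.Limits

universe v u

variable {C : Type u} [Category.{v} C]

/-- in a category with binary phased coproducts and a phased initial
object `Z`, the coprojection `A ⟶ A +̇ Z` is an isomorphism. -/
theorem stmt_4 (hC : HasPhasedCoproducts₂ C) (Z : C) (hZ : IsPhasedInitial Z)
    (A P : C) (κA : A ⟶ P) (κZ : Z ⟶ P) (hP : IsPhasedCoproduct₂ A Z P κA κZ) :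
    IsIso κA := by
  obtain ⟨z₀⟩ := hZ.exists_hom A
  obtain ⟨V, hV⟩ := hZ.phase (z₀ ≫ κA) κZ
  obtain ⟨t, ht1, ht2⟩ := hP.lift (𝟙 A) (V ≫ z₀)
  have h1 : κA ≫ (t ≫ κA) = κA ≫ 𝟙 P := by
    rw [← Category.assoc, ht1]; simp
  have h2 : κZ ≫ (t ≫ κA) = κZ ≫ 𝟙 P := by
    rw [← Category.assoc, ht2, Category.comp_id, Category.assoc, ← hV]
  obtain ⟨U, ⟨hU1, _⟩, hU⟩ := hP.phase (t ≫ κA) (𝟙 P) h1 h2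
  refine ⟨U ≫ t, ?_, ?_⟩
  · rw [← Category.assoc, hU1, ht1]
  · rw [Category.assoc, ← hU]
end

section
/- Let A +̇ B be a phased coproduct of A and B with coprojections κ_A, κ_B, and let (A +̇ B) +̇ C be a phased coproduct of A +̇ B and C with coprojections κ_{A+̇B}, κ_C. Then (A +̇ B) +̇ C is a phased coproduct of the three objects A, B, C with coprojections κ_{A+̇B} ∘ κ_A, κ_{A+̇B} ∘ κ_B and κ_C. -/
open CategoryTheory CategoryTheory.Limits

universe v u

variable {C : Type u} [Category.{v} C]

/-- Ternary phased coproduct. -/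
structure IsPhasedCoproduct₃ (A B C' P : C) (κA : A ⟶ P) (κB : B ⟶ P) (κC : C' ⟶ P) : Prop where
  lift : ∀ {D : C} (f : A ⟶ D) (g : B ⟶ D) (k : C' ⟶ D),
    ∃ h : P ⟶ D, κA ≫ h = f ∧ κB ≫ h = g ∧ κC ≫ h = k
  phase : ∀ {D : C} (h h' : P ⟶ D), κA ≫ h = κA ≫ h' → κB ≫ h = κB ≫ h' →
      κC ≫ h = κC ≫ h' →
    ∃ U : P ⟶ P, (κA ≫ U = κA ∧ κB ≫ U = κB ∧ κC ≫ U = κC) ∧ h' = U ≫ h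

/-- associativity of phased coproducts: `(A +̇ B) +̇ C` is a phased
coproduct of `A`, `B`, `C`. -/
theorem stmt_5 (A B C' P Q : C) (κA : A ⟶ P) (κB : B ⟶ P)
    (hP : IsPhasedCoproduct₂ A B P κA κB)
    (κP : P ⟶ Q) (κC : C' ⟶ Q) (hQ : IsPhasedCoproduct₂ P C' Q κP κC) :
    IsPhasedCoproduct₃ A B C' Q (κA ≫ κP) (κB ≫ κP) κC := by
  constructor
  · intro D f g k
    obtain ⟨h₁, hf, hg⟩ := hP.lift f g
    obtain ⟨h, hh₁, hk⟩ := hQ.lift h₁ k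
    exact ⟨h, by simp [Category.assoc, hh₁, hf], by simp [Category.assoc, hh₁, hg], hk⟩
  · intro D h h' ha hb hc
    obtain ⟨U, ⟨hUA, hUB⟩, hU⟩ := hP.phase (κP ≫ h) (κP ≫ h')
      (by simpa [Category.assoc] using ha) (by simpa [Category.assoc] using hb)
    obtain ⟨W, hWP, hWC⟩ := hQ.lift (U ≫ κP) κC
    obtain ⟨V, ⟨hVP, hVC⟩, hV⟩ := hQ.phase (W ≫ h) h'
      (by rw [← Category.assoc, hWP, Category.assoc, ← hU])
      (by rw [← Category.assoc, hWC, hc])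
    refine ⟨V ≫ W, ⟨?_, ?_, ?_⟩, by rw [hV, Category.assoc]⟩
    · rw [Category.assoc, ← Category.assoc κP V W, hVP, hWP,
        ← Category.assoc, hUA]
    · rw [Category.assoc, ← Category.assoc κP V W, hVP, hWP,
        ← Category.assoc, hUB]
    · rw [← Category.assoc, hVC, hWC]
end

section
/- If a category has an initial object and a phased coproduct of every pair of objects, then every finite family of objects (A_1, …, A_n) has a phased coproduct. -/
open CategoryTheory CategoryTheory.Limits

universe v u

variable {C : Type u} [Category.{v} C]

/-- a category with an initial object and binary phased coproducts has
phased coproducts of all finite families of objects. -/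
theorem stmt_6 [HasInitial C] (hC : HasPhasedCoproducts₂ C) (n : ℕ) (A : Fin n → C) :
    ∃ (P : C) (κ : ∀ i, A i ⟶ P), IsPhasedCoproduct A P κ := by
  induction n with
  | zero =>
    refine ⟨⊥_ C, fun i => i.elim0, ?_, ?_⟩
    · intro D f
      exact ⟨initial.to D, fun i => i.elim0⟩
    · intro D h h' _
      exact ⟨𝟙 _, fun i => i.elim0, by simp [initial.hom_ext h h']⟩
  | succ n ih =>
    obtain ⟨P, κ, hP⟩ := ih (fun i => A i.castSucc)
    obtain ⟨Q, κP, κA, hQ⟩ := hC P (A (Fin.last n))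
    refine ⟨Q, fun i => Fin.lastCases κA (fun j => κ j ≫ κP) i, ?_, ?_⟩
    · intro D f
      obtain ⟨h, hh⟩ := hP.lift (fun i => f i.castSucc)
      obtain ⟨g, hg1, hg2⟩ := hQ.lift h (f (Fin.last n))
      refine ⟨g, fun i => ?_⟩
      refine Fin.lastCases ?_ (fun j => ?_) i
      · simpa using hg2
      · simp only [Fin.lastCases_castSucc, Category.assoc, hg1]
        exact hh j
    · intro D h h' hhh
      obtain ⟨V, hV1, hV2⟩ := hP.phase (κP ≫ h) (κP ≫ h')
        (fun i => by simpa [Category.assoc] using hhh i.castSucc)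
      obtain ⟨W, hW1, hW2⟩ := hQ.lift (V ≫ κP) κA
      have e1 : κP ≫ W ≫ h = κP ≫ h' := by
        rw [← Category.assoc, hW1, Category.assoc, ← hV2]
      have e2 : κA ≫ W ≫ h = κA ≫ h' := by
        rw [← Category.assoc, hW2]; simpa using hhh (Fin.last n)
      obtain ⟨U₀, ⟨hU1, hU2⟩, hU3⟩ := hQ.phase (W ≫ h) h' e1 e2
      refine ⟨U₀ ≫ W, fun i => ?_, by simpa [Category.assoc] using hU3⟩
      refine Fin.lastCases ?_ (fun j => ?_) i
      · simp [← Category.assoc, hU2, hW2]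
      · simp only [Fin.lastCases_castSucc, Category.assoc]
        rw [show κP ≫ U₀ ≫ W = κP ≫ W by rw [← Category.assoc, hU1], hW1,
          ← Category.assoc, hV1]
end

section
/- Let C be a category with finite coproducts and a choice of trivial isomorphisms, with induced congruence ∼ and quotient functor [−] : C → C/∼. Then C/∼ has finite phased coproducts: any initial object of C is initial in C/∼, and for any coproduct A + B in C with coprojections κ_A, κ_B, the object A + B together with [κ_A], [κ_B] is a phased coproduct of A and B in C/∼. -/
open CategoryTheory CategoryTheory.Limits

universe v u

variable {C : Type u} [Category.{v} C]

/-- Binary (actual) coproduct, phrased elementarily. -/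
def IsCoproduct₂ (A B P : C) (κA : A ⟶ P) (κB : B ⟶ P) : Prop :=
  ∀ {D : C} (f : A ⟶ D) (g : B ⟶ D), ∃! h : P ⟶ D, κA ≫ h = f ∧ κB ≫ h = g

/-- A choice of trivial isomorphisms: a subgroup of automorphisms at each object,
such that every morphism `f : A ⟶ B` intertwines trivial isomorphisms on `B` with
trivial isomorphisms on `A`. -/
def IsTrivialIsos (T : ∀ A : C, Subgroup (Aut A)) : Prop :=
  ∀ {A B : C} (f : A ⟶ B), ∀ p ∈ T B, ∃ q ∈ T A, f ≫ p.hom = q.hom ≫ f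

/-- The congruence induced by a choice of trivial isomorphisms:
`f ∼ g` iff `f = g ∘ q` for some trivial `q`. -/
def trivRel (T : ∀ A : C, Subgroup (Aut A)) : HomRel C :=
  fun {A _} f g => ∃ q ∈ T A, f = q.hom ≫ g

theorem trivRel_congruence (T : ∀ A : C, Subgroup (Aut A)) (hT : IsTrivialIsos T) :
    Congruence (trivRel T) where
  equivalence := by
    refine fun {X Y} => ⟨?_, ?_, ?_⟩
    · intro f; exact ⟨1, one_mem _, (Category.id_comp f).symm⟩
    · rintro f g ⟨q, hq, rfl⟩
      exact ⟨q⁻¹, inv_mem hq, by simp [Aut.Aut_inv_def]; exact (q.inv_hom_id_assoc _).symm⟩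
    · rintro f g h ⟨q, hq, rfl⟩ ⟨p, hp, rfl⟩
      exact ⟨p * q, mul_mem hp hq, by simp [Aut.Aut_mul_def]; exact (Category.assoc _ _ _).symm⟩
  comp_left := by
    rintro X Y Z f g g' ⟨q, hq, rfl⟩
    obtain ⟨p, hp, hpq⟩ := hT f q hq
    exact ⟨p, hp, by rw [← Category.assoc, hpq]; simp⟩
  comp_right := by
    rintro X Y Z f f' g ⟨q, hq, rfl⟩
    exact ⟨q, hq, by simp⟩

/-- the quotient of a category with finite coproducts by a choice of
trivial isomorphisms has finite phased coproducts; initial objects stay initial and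
images of coproducts are phased coproducts. -/
theorem stmt_7 [HasInitial C]
    (hcop : ∀ A B : C, ∃ (P : C) (κA : A ⟶ P) (κB : B ⟶ P), IsCoproduct₂ A B P κA κB)
    (T : ∀ A : C, Subgroup (Aut A)) (hT : IsTrivialIsos T) :
    (∀ Z : C, IsInitial Z → Nonempty (IsInitial ((Quotient.functor (trivRel T)).obj Z))) ∧
    (∀ (A B P : C) (κA : A ⟶ P) (κB : B ⟶ P), IsCoproduct₂ A B P κA κB →
      IsPhasedCoproduct₂ ((Quotient.functor (trivRel T)).obj A)
        ((Quotient.functor (trivRel T)).obj B) ((Quotient.functor (trivRel T)).obj P)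
        ((Quotient.functor (trivRel T)).map κA) ((Quotient.functor (trivRel T)).map κB)) ∧
    HasPhasedCoproducts₂ (Quotient (trivRel T)) := by
  letI : Congruence (trivRel T) := trivRel_congruence T hT
  set r := trivRel T
  let F := Quotient.functor r
  have hmapeq : ∀ {X Y : C} (f f' : X ⟶ Y), r f f' → F.map f = F.map f' := by
    intro X Y f f' h
    exact (Quotient.functor_map_eq_iff r f f').2 h
  have key : ∀ (A B P : C) (κA : A ⟶ P) (κB : B ⟶ P), IsCoproduct₂ A B P κA κB →
      IsPhasedCoproduct₂ (F.obj A) (F.obj B) (F.obj P) (F.map κA) (F.map κB) := by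
    intro A B P κA κB hc
    constructor
    · intro D f g
      obtain ⟨f₀, rfl⟩ := F.map_surjective (show F.obj A ⟶ F.obj D.as from f)
      obtain ⟨g₀, rfl⟩ := F.map_surjective (show F.obj B ⟶ F.obj D.as from g)
      obtain ⟨h, ⟨hA, hB⟩, -⟩ := hc f₀ g₀
      exact ⟨F.map h, by rw [← F.map_comp, hA], by rw [← F.map_comp, hB]⟩
    · intro D h h' e₁ e₂
      obtain ⟨h₀, rfl⟩ := F.map_surjective (show F.obj P ⟶ F.obj D.as from h)
      obtain ⟨h₀', rfl⟩ := F.map_surjective (show F.obj P ⟶ F.obj D.as from h')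
      rw [← F.map_comp, ← F.map_comp] at e₁ e₂
      obtain ⟨p, hp, hpe⟩ := (Quotient.functor_map_eq_iff r _ _).1 e₁
      obtain ⟨q, hq, hqe⟩ := (Quotient.functor_map_eq_iff r _ _).1 e₂
      obtain ⟨U, ⟨hUA, hUB⟩, -⟩ := hc (p⁻¹.hom ≫ κA) (q⁻¹.hom ≫ κB)
      have hU : U ≫ h₀ = h₀' := by
        obtain ⟨w, hw, uniq⟩ := hc (κA ≫ h₀') (κB ≫ h₀')
        have e3 : U ≫ h₀ = h₀' := by
          rw [uniq (U ≫ h₀) ⟨?_, ?_⟩, ← uniq h₀' ⟨rfl, rfl⟩]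
          · rw [← Category.assoc, hUA, Category.assoc, hpe, ← Category.assoc]
            simp [Aut.Aut_inv_def]; exact p.inv_hom_id_assoc _
          · rw [← Category.assoc, hUB, Category.assoc, hqe, ← Category.assoc]
            simp [Aut.Aut_inv_def]; exact q.inv_hom_id_assoc _
        exact e3
      refine ⟨F.map U, ⟨?_, ?_⟩, ?_⟩
      · rw [← F.map_comp, hUA]
        exact hmapeq _ _ ⟨p⁻¹, inv_mem hp, rfl⟩
      · rw [← F.map_comp, hUB]
        exact hmapeq _ _ ⟨q⁻¹, inv_mem hq, rfl⟩
      · rw [← F.map_comp, hU]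
  refine ⟨?_, key, ?_⟩
  · intro Z hZ
    refine ⟨IsInitial.ofUniqueHom (fun Y => F.map (hZ.to Y.as)) ?_⟩
    intro Y m
    obtain ⟨f, rfl⟩ := F.map_surjective (show F.obj Z ⟶ F.obj Y.as from m)
    rw [hZ.hom_ext f (hZ.to Y.as)]
  · intro X Y
    obtain ⟨P, κA, κB, hc⟩ := hcop X.as Y.as
    exact ⟨F.obj P, F.map κA, F.map κB, key X.as Y.as P κA κB hc⟩
end

section
/- Let C be a category with finite phased coproducts all of whose coprojections are monic, with transitive phases, and with a phase generator I. Then the category GP(C) has finite coproducts with monic coprojections. Concretely: any object 0̂ = 0 +̇ I with 0 initial in C is initial in GP(C); and for objects Â = A +̇ I and B̂ = B +̇ I of GP(C), any phased coproduct (A +̇ B) +̇ I together with the morphisms κ̂_A : Â → (A +̇ B) +̇ I and κ̂_B : B̂ → (A +̇ B) +̇ I of GP(C) satisfying κ̂_A ∘ κ_A = κ_{A+̇B} ∘ κ_A and κ̂_B ∘ κ_B = κ_{A+̇B} ∘ κ_B forms a coproduct of Â and B̂ in GP(C). -/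
open CategoryTheory CategoryTheory.Limits

universe v u

variable {C : Type u} [Category.{v} C]

/-- All coprojections of binary phased coproducts are monic. -/
def MonicPhasedCoproducts (C : Type u) [Category.{v} C] : Prop :=
  ∀ {A B P : C} {κA : A ⟶ P} {κB : B ⟶ P},
    IsPhasedCoproduct₂ A B P κA κB → Mono κA ∧ Mono κB

/-- Transitive phases: diagonal morphisms intertwine phases with phases. -/
def PhasesTransitive (C : Type u) [Category.{v} C] : Prop :=
  ∀ {A B P : C} {κA : A ⟶ P} {κB : B ⟶ P} {A' B' P' : C} {κA' : A' ⟶ P'} {κB' : B' ⟶ P'},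
    IsPhasedCoproduct₂ A B P κA κB → IsPhasedCoproduct₂ A' B' P' κA' κB' →
    ∀ f : P ⟶ P', (∃ g, κA ≫ f = g ≫ κA') → (∃ h, κB ≫ f = h ≫ κB') →
    ∀ U : P ⟶ P, κA ≫ U = κA → κB ≫ U = κB →
    ∃ V : P' ⟶ P', (κA' ≫ V = κA' ∧ κB' ≫ V = κB') ∧ U ≫ f = f ≫ V

/-- Phase generator: codiagonals out of `Gen +̇ Gen` are phase monic, and diagonal
monomorphisms out of `Gen +̇ Gen` are phase epic. -/
structure IsPhaseGenerator (Gen : C) : Prop where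
  phaseMonic : ∀ {P : C} {κ₁ κ₂ : Gen ⟶ P}, IsPhasedCoproduct₂ Gen Gen P κ₁ κ₂ →
    ∀ d : P ⟶ Gen, κ₁ ≫ d = 𝟙 Gen → κ₂ ≫ d = 𝟙 Gen →
    ∀ U V : P ⟶ P, (κ₁ ≫ U = κ₁ ∧ κ₂ ≫ U = κ₂) → (κ₁ ≫ V = κ₁ ∧ κ₂ ≫ V = κ₂) →
      U ≫ d = V ≫ d → U = V
  phaseEpic : ∀ {P : C} {κ₁ κ₂ : Gen ⟶ P}, IsPhasedCoproduct₂ Gen Gen P κ₁ κ₂ →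
    ∀ {A B Q : C} {κA : A ⟶ Q} {κB : B ⟶ Q}, IsPhasedCoproduct₂ A B Q κA κB →
    ∀ m : P ⟶ Q, Mono m → (∃ g, κ₁ ≫ m = g ≫ κA) → (∃ h, κ₂ ≫ m = h ≫ κB) →
    ∀ U V : Q ⟶ Q, (κA ≫ U = κA ∧ κB ≫ U = κB) → (κA ≫ V = κA ∧ κB ≫ V = κB) →
      m ≫ U = m ≫ V → U = V

/-- Objects of the category `GP(C)`: phased coproducts of the form `A +̇ Gen`. -/
structure GPObj (C : Type u) [Category.{v} C] (Gen : C) where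
  base : C
  tot : C
  ι : base ⟶ tot
  ιI : Gen ⟶ tot
  isPC : IsPhasedCoproduct₂ base Gen tot ι ιI

/-- Morphisms of `GP(C)`: morphisms between the totals which preserve the
`Gen`-coprojection and are diagonal. -/
@[ext]
structure GPHom {C : Type u} [Category.{v} C] {Gen : C} (X Y : GPObj C Gen) where
  f : X.tot ⟶ Y.tot
  unit : X.ιI ≫ f = Y.ιI
  diag : ∃ g : X.base ⟶ Y.base, X.ι ≫ f = g ≫ Y.ι

instance {Gen : C} : Category (GPObj C Gen) where
  Hom := GPHom
  id X := ⟨𝟙 X.tot, Category.comp_id _, ⟨𝟙 X.base, by simp⟩⟩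
  comp {X Y Z} f g := ⟨f.f ≫ g.f,
    by rw [← Category.assoc, f.unit, g.unit],
    by
      obtain ⟨u, hu⟩ := f.diag
      obtain ⟨v, hv⟩ := g.diag
      exact ⟨u ≫ v, by rw [← Category.assoc, hu, Category.assoc, hv, ← Category.assoc]⟩⟩
  id_comp f := GPHom.ext (Category.id_comp f.f)
  comp_id f := GPHom.ext (Category.comp_id f.f)
  assoc f g h := GPHom.ext (Category.assoc f.f g.f h.f)

/-- The underlying morphism in `C` of a morphism of `GP(C)`. -/
def GPHom.tot {Gen : C} {X Y : GPObj C Gen} (f : X ⟶ Y) : X.tot ⟶ Y.tot :=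
  GPHom.f f

/-- `u` is "the" diagonal component of the `GP(C)`-morphism `f`. -/
def GPdiag {Gen : C} {X Y : GPObj C Gen} (f : X ⟶ Y) (u : X.base ⟶ Y.base) : Prop :=
  X.ι ≫ GPHom.tot f = u ≫ Y.ι

/-- A `GP(C)`-endomorphism which is a phase in `C`. -/
def GPisPhase {Gen : C} {X : GPObj C Gen} (U : X ⟶ X) : Prop :=
  X.ι ≫ GPHom.tot U = X.ι

section Helpers

variable {C : Type u} [Category.{v} C]

private lemma pc_swap {A B P : C} {κA : A ⟶ P} {κB : B ⟶ P}
    (h : IsPhasedCoproduct₂ A B P κA κB) : IsPhasedCoproduct₂ B A P κB κA where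
  lift f g := by
    obtain ⟨e, h1, h2⟩ := h.lift g f
    exact ⟨e, h2, h1⟩
  phase h₁ h₂ e1 e2 := by
    obtain ⟨U, ⟨u1, u2⟩, hU⟩ := h.phase h₁ h₂ e2 e1
    exact ⟨U, ⟨u2, u1⟩, hU⟩

private lemma phase_inv {A B P : C} {κA : A ⟶ P} {κB : B ⟶ P}
    (h : IsPhasedCoproduct₂ A B P κA κB) {U : P ⟶ P}
    (hA : κA ≫ U = κA) (hB : κB ≫ U = κB) :
    ∃ W : P ⟶ P, (κA ≫ W = κA ∧ κB ≫ W = κB) ∧ U ≫ W = 𝟙 P ∧ W ≫ U = 𝟙 P := by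
  obtain ⟨W, ⟨w1, w2⟩, hW⟩ := h.phase U (𝟙 P) (by simp [hA]) (by simp [hB])
  obtain ⟨W', ⟨w1', w2'⟩, hW'⟩ := h.phase W (𝟙 P) (by simp [w1]) (by simp [w2])
  have hUW' : U = W' := by
    calc U = (W' ≫ W) ≫ U := by rw [← hW']; simp
    _ = W' ≫ (W ≫ U) := by rw [Category.assoc]
    _ = W' := by rw [← hW]; simp
  refine ⟨W, ⟨w1, w2⟩, ?_, hW.symm⟩
  rw [hUW']; exact hW'.symm

private lemma phase_isIso {A B P : C} {κA : A ⟶ P} {κB : B ⟶ P}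
    (h : IsPhasedCoproduct₂ A B P κA κB) {U : P ⟶ P}
    (hA : κA ≫ U = κA) (hB : κB ≫ U = κB) : IsIso U := by
  obtain ⟨W, _, h1, h2⟩ := phase_inv h hA hB
  exact ⟨W, h1, h2⟩

private lemma split_iso {X Y : C} (f : X ⟶ Y) (g : Y ⟶ X)
    (h1 : IsIso (f ≫ g)) (h2 : IsIso (g ≫ f)) : IsIso f := by
  refine ⟨g ≫ inv (f ≫ g), ?_, ?_⟩
  · rw [← Category.assoc]; exact IsIso.hom_inv_id (f ≫ g)
  · have l : (inv (g ≫ f) ≫ g) ≫ f = 𝟙 Y := by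
      rw [Category.assoc]; exact IsIso.inv_hom_id (g ≫ f)
    have key : g ≫ inv (f ≫ g) = inv (g ≫ f) ≫ g := by
      calc g ≫ inv (f ≫ g)
          = (inv (g ≫ f) ≫ (g ≫ f)) ≫ (g ≫ inv (f ≫ g)) := by
            rw [IsIso.inv_hom_id, Category.id_comp]
        _ = inv (g ≫ f) ≫ g ≫ ((f ≫ g) ≫ inv (f ≫ g)) := by
            simp only [Category.assoc]
        _ = inv (g ≫ f) ≫ g := by rw [IsIso.hom_inv_id, Category.comp_id]
    rw [key]; exact l

private lemma endo_iso {A B P : C} {κA : A ⟶ P} {κB : B ⟶ P}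
    (h : IsPhasedCoproduct₂ A B P κA κB) (e : P ⟶ P) {α : A ⟶ A} {β : B ⟶ B}
    (hα : IsIso α) (hβ : IsIso β)
    (h1 : κA ≫ e = α ≫ κA) (h2 : κB ≫ e = β ≫ κB) : IsIso e := by
  haveI := hα; haveI := hβ
  obtain ⟨ζ, hz1, hz2⟩ := h.lift (inv α ≫ κA) (inv β ≫ κB)
  have he1 : IsIso (e ≫ ζ) := by
    refine phase_isIso h ?_ ?_
    · rw [← Category.assoc, h1, Category.assoc, hz1, ← Category.assoc,
        IsIso.hom_inv_id, Category.id_comp]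
    · rw [← Category.assoc, h2, Category.assoc, hz2, ← Category.assoc,
        IsIso.hom_inv_id, Category.id_comp]
  have he2 : IsIso (ζ ≫ e) := by
    refine phase_isIso h ?_ ?_
    · rw [← Category.assoc, hz1, Category.assoc, h1, ← Category.assoc,
        IsIso.inv_hom_id, Category.id_comp]
    · rw [← Category.assoc, hz2, Category.assoc, h2, ← Category.assoc,
        IsIso.inv_hom_id, Category.id_comp]
  exact split_iso e ζ he1 he2

private lemma pc_of_iso {A B R Q : C} {r₁ : A ⟶ R} {r₂ : B ⟶ R}
    (h : IsPhasedCoproduct₂ A B R r₁ r₂) (ω : R ⟶ Q) (hω : IsIso ω) :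
    IsPhasedCoproduct₂ A B Q (r₁ ≫ ω) (r₂ ≫ ω) := by
  haveI := hω
  constructor
  · intro D f g
    obtain ⟨e, h1, h2⟩ := h.lift f g
    refine ⟨inv ω ≫ e, ?_, ?_⟩
    · rw [Category.assoc, ← Category.assoc ω, IsIso.hom_inv_id, Category.id_comp, h1]
    · rw [Category.assoc, ← Category.assoc ω, IsIso.hom_inv_id, Category.id_comp, h2]
  · intro D h₁ h₂ e1 e2
    obtain ⟨U, ⟨u1, u2⟩, hU⟩ := h.phase (ω ≫ h₁) (ω ≫ h₂)
      (by rw [← Category.assoc, ← Category.assoc]; exact e1)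
      (by rw [← Category.assoc, ← Category.assoc]; exact e2)
    refine ⟨inv ω ≫ U ≫ ω, ⟨?_, ?_⟩, ?_⟩
    · rw [Category.assoc, ← Category.assoc ω, IsIso.hom_inv_id, Category.id_comp,
        ← Category.assoc, u1]
    · rw [Category.assoc, ← Category.assoc ω, IsIso.hom_inv_id, Category.id_comp,
        ← Category.assoc, u2]
    · have : h₂ = inv ω ≫ (ω ≫ h₂) := by
        rw [← Category.assoc, IsIso.inv_hom_id, Category.id_comp]
      rw [this, hU]
      simp only [Category.assoc]

end Helpers
section Structs

variable {C : Type u} [Category.{v} C]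

private lemma struct_XTB {Gen : C} (hcop : HasPhasedCoproducts₂ C)
    {A B P T XT : C} {κA : A ⟶ P} {κB : B ⟶ P}
    (isP : IsPhasedCoproduct₂ A B P κA κB)
    {κP : P ⟶ T} {κI : Gen ⟶ T} (isT : IsPhasedCoproduct₂ P Gen T κP κI)
    {ιA : A ⟶ XT} {ιIX : Gen ⟶ XT} (isX : IsPhasedCoproduct₂ A Gen XT ιA ιIX)
    (a : XT ⟶ T) (ha1 : ιA ≫ a = κA ≫ κP) (ha2 : ιIX ≫ a = κI) :
    IsPhasedCoproduct₂ XT B T a (κB ≫ κP) := by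
  obtain ⟨R, r₁, r₂, isR⟩ := hcop XT B
  obtain ⟨ω, hω1, hω2⟩ := isR.lift a (κB ≫ κP)
  obtain ⟨cP, hcP1, hcP2⟩ := isP.lift (ιA ≫ r₁) r₂
  obtain ⟨χ, hχ1, hχ2⟩ := isT.lift cP (ιIX ≫ r₁)
  have c1 : ιA ≫ (a ≫ χ) = ιA ≫ r₁ := by
    rw [← Category.assoc, ha1, Category.assoc, hχ1, hcP1]
  have c2 : ιIX ≫ (a ≫ χ) = ιIX ≫ r₁ := by
    rw [← Category.assoc, ha2, hχ2]
  obtain ⟨α, ⟨hα1, hα2⟩, hα3⟩ := isX.phase r₁ (a ≫ χ) c1.symm c2.symm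
  have hr2 : (κB ≫ κP) ≫ χ = r₂ := by rw [Category.assoc, hχ1, hcP2]
  have d1 : κA ≫ (cP ≫ ω) = κA ≫ κP := by
    rw [← Category.assoc, hcP1, Category.assoc, hω1, ha1]
  have d2 : κB ≫ (cP ≫ ω) = κB ≫ κP := by
    rw [← Category.assoc, hcP2, hω2]
  obtain ⟨u, ⟨hu1, hu2⟩, hu3⟩ := isP.phase κP (cP ≫ ω) d1.symm d2.symm
  have hωχ : IsIso (ω ≫ χ) := by
    refine endo_iso isR (ω ≫ χ) (phase_isIso isX hα1 hα2) (inferInstance : IsIso (𝟙 B))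
      ?_ ?_
    · rw [← Category.assoc, hω1]; exact hα3.symm ▸ hα3
    · rw [← Category.assoc, hω2, hr2, Category.id_comp]
  have hχω : IsIso (χ ≫ ω) := by
    refine endo_iso isT (χ ≫ ω) (phase_isIso isP hu1 hu2) (inferInstance : IsIso (𝟙 Gen))
      ?_ ?_
    · rw [← Category.assoc, hχ1]; exact hu3.symm ▸ hu3
    · rw [← Category.assoc, hχ2, Category.assoc, hω1, ha2, Category.id_comp]
  have hiso : IsIso ω := split_iso ω χ hωχ hχω
  have pc := pc_of_iso isR ω hiso
  rw [hω1, hω2] at pc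
  exact pc

private lemma struct_PJQ {Gen : C} (hcop : HasPhasedCoproducts₂ C)
    {A B P XT YT Q J : C} {κA : A ⟶ P} {κB : B ⟶ P}
    (isP : IsPhasedCoproduct₂ A B P κA κB)
    {ιA : A ⟶ XT} {ιIX : Gen ⟶ XT} (isX : IsPhasedCoproduct₂ A Gen XT ιA ιIX)
    {ιB : B ⟶ YT} {ιIY : Gen ⟶ YT} (isY : IsPhasedCoproduct₂ B Gen YT ιB ιIY)
    {k₁ k₂ : Gen ⟶ J} (isJ : IsPhasedCoproduct₂ Gen Gen J k₁ k₂)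
    {j₁ : XT ⟶ Q} {j₂ : YT ⟶ Q} (isQ : IsPhasedCoproduct₂ XT YT Q j₁ j₂)
    (sP : P ⟶ Q) (hs1 : κA ≫ sP = ιA ≫ j₁) (hs2 : κB ≫ sP = ιB ≫ j₂)
    (m : J ⟶ Q) (hm1 : k₁ ≫ m = ιIX ≫ j₁) (hm2 : k₂ ≫ m = ιIY ≫ j₂) :
    IsPhasedCoproduct₂ P J Q sP m := by
  obtain ⟨R, r₁, r₂, isR⟩ := hcop P J
  obtain ⟨ω, hω1, hω2⟩ := isR.lift sP m
  obtain ⟨cX, hx1, hx2⟩ := isX.lift (κA ≫ r₁) (k₁ ≫ r₂)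
  obtain ⟨cY, hy1, hy2⟩ := isY.lift (κB ≫ r₁) (k₂ ≫ r₂)
  obtain ⟨χ, hχ1, hχ2⟩ := isQ.lift cX cY
  have c1 : κA ≫ (sP ≫ χ) = κA ≫ r₁ := by
    rw [← Category.assoc, hs1, Category.assoc, hχ1, hx1]
  have c2 : κB ≫ (sP ≫ χ) = κB ≫ r₁ := by
    rw [← Category.assoc, hs2, Category.assoc, hχ2, hy1]
  obtain ⟨α₁, ⟨hα1, hα2⟩, hα3⟩ := isP.phase r₁ (sP ≫ χ) c1.symm c2.symm
  have d1 : k₁ ≫ (m ≫ χ) = k₁ ≫ r₂ := by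
    rw [← Category.assoc, hm1, Category.assoc, hχ1, hx2]
  have d2 : k₂ ≫ (m ≫ χ) = k₂ ≫ r₂ := by
    rw [← Category.assoc, hm2, Category.assoc, hχ2, hy2]
  obtain ⟨α₂, ⟨hα1', hα2'⟩, hα3'⟩ := isJ.phase r₂ (m ≫ χ) d1.symm d2.symm
  have e1 : ιA ≫ (cX ≫ ω) = ιA ≫ j₁ := by
    rw [← Category.assoc, hx1, Category.assoc, hω1, hs1]
  have e2 : ιIX ≫ (cX ≫ ω) = ιIX ≫ j₁ := by
    rw [← Category.assoc, hx2, Category.assoc, hω2, hm1]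
  obtain ⟨β₁, ⟨hβ1, hβ2⟩, hβ3⟩ := isX.phase j₁ (cX ≫ ω) e1.symm e2.symm
  have f1 : ιB ≫ (cY ≫ ω) = ιB ≫ j₂ := by
    rw [← Category.assoc, hy1, Category.assoc, hω1, hs2]
  have f2 : ιIY ≫ (cY ≫ ω) = ιIY ≫ j₂ := by
    rw [← Category.assoc, hy2, Category.assoc, hω2, hm2]
  obtain ⟨β₂, ⟨hβ1', hβ2'⟩, hβ3'⟩ := isY.phase j₂ (cY ≫ ω) f1.symm f2.symm
  have hωχ : IsIso (ω ≫ χ) := by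
    refine endo_iso isR (ω ≫ χ) (phase_isIso isP hα1 hα2) (phase_isIso isJ hα1' hα2')
      ?_ ?_
    · rw [← Category.assoc, hω1]; exact hα3
    · rw [← Category.assoc, hω2]; exact hα3'
  have hχω : IsIso (χ ≫ ω) := by
    refine endo_iso isQ (χ ≫ ω) (phase_isIso isX hβ1 hβ2) (phase_isIso isY hβ1' hβ2')
      ?_ ?_
    · rw [← Category.assoc, hχ1]; exact hβ3
    · rw [← Category.assoc, hχ2]; exact hβ3'
  have hiso : IsIso ω := split_iso ω χ hωχ hχω
  have pc := pc_of_iso isR ω hiso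
  rw [hω1, hω2] at pc
  exact pc

end Structs
section Uniq

variable {C : Type u} [Category.{v} C]

private lemma uniq_lemma {Gen : C} (hcop : HasPhasedCoproducts₂ C)
    (hmono : MonicPhasedCoproducts C) (hgen : IsPhaseGenerator Gen)
    {A B P T XT YT D WT : C} {κA : A ⟶ P} {κB : B ⟶ P}
    (isP : IsPhasedCoproduct₂ A B P κA κB)
    {κP : P ⟶ T} {κI : Gen ⟶ T} (isT : IsPhasedCoproduct₂ P Gen T κP κI)
    {ιA : A ⟶ XT} {ιIX : Gen ⟶ XT} (isX : IsPhasedCoproduct₂ A Gen XT ιA ιIX)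
    {ιB : B ⟶ YT} {ιIY : Gen ⟶ YT} (isY : IsPhasedCoproduct₂ B Gen YT ιB ιIY)
    (a : XT ⟶ T) (ha1 : ιA ≫ a = κA ≫ κP) (ha2 : ιIX ≫ a = κI)
    (b : YT ⟶ T) (hb1 : ιB ≫ b = κB ≫ κP) (hb2 : ιIY ≫ b = κI)
    {Wι : D ⟶ WT} {WιI : Gen ⟶ WT} (isW : IsPhasedCoproduct₂ D Gen WT Wι WιI)
    (H₁ H₂ : T ⟶ WT) (hH₁ : κI ≫ H₁ = WιI) (hH₂ : κI ≫ H₂ = WιI)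
    (hA : a ≫ H₁ = a ≫ H₂) (hB : b ≫ H₁ = b ≫ H₂) : H₁ = H₂ := by
  obtain ⟨Q, j₁, j₂, isQ⟩ := hcop XT YT
  obtain ⟨J, k₁, k₂, isJ⟩ := hcop Gen Gen
  obtain ⟨sP, hs1, hs2⟩ := isP.lift (ιA ≫ j₁) (ιB ≫ j₂)
  obtain ⟨m, hm1, hm2⟩ := isJ.lift (ιIX ≫ j₁) (ιIY ≫ j₂)
  obtain ⟨M, hM1, hM2⟩ := isQ.lift a b
  obtain ⟨s, hss1, hss2⟩ := isT.lift sP (ιIX ≫ j₁)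
  -- Ψ := s ≫ M with κP ≫ Ψ = u ≫ κP, κI ≫ Ψ = κI
  have e1 : κA ≫ (sP ≫ M) = κA ≫ κP := by
    rw [← Category.assoc, hs1, Category.assoc, hM1, ha1]
  have e2 : κB ≫ (sP ≫ M) = κB ≫ κP := by
    rw [← Category.assoc, hs2, Category.assoc, hM2, hb1]
  obtain ⟨u, ⟨hu1, hu2⟩, hu3⟩ := isP.phase κP (sP ≫ M) e1.symm e2.symm
  obtain ⟨u', ⟨hu'1, hu'2⟩, huu', hu'u⟩ := phase_inv isP hu1 hu2
  have hΨP : κP ≫ (s ≫ M) = u ≫ κP := by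
    rw [← Category.assoc, hss1]; exact hu3
  have hΨI : κI ≫ (s ≫ M) = κI := by
    rw [← Category.assoc, hss2, Category.assoc, hM1, ha2]
  obtain ⟨Ψ₁, hΨ₁1, hΨ₁2⟩ := isT.lift (u' ≫ κP) κI
  have hiso : IsIso (s ≫ M) := by
    have i1 : IsIso ((s ≫ M) ≫ Ψ₁) := by
      refine phase_isIso isT ?_ ?_
      · rw [← Category.assoc, hΨP, Category.assoc, hΨ₁1, ← Category.assoc, huu',
          Category.id_comp]
      · rw [← Category.assoc, hΨI, hΨ₁2]
    have i2 : IsIso (Ψ₁ ≫ (s ≫ M)) := by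
      refine phase_isIso isT ?_ ?_
      · rw [← Category.assoc, hΨ₁1, Category.assoc, hΨP, ← Category.assoc, hu'u,
          Category.id_comp]
      · rw [← Category.assoc, hΨ₁2, hΨI]
    exact split_iso (s ≫ M) Ψ₁ i1 i2
  -- Θ : M ≫ H₂ = Θ ≫ (M ≫ H₁)
  have f1 : j₁ ≫ (M ≫ H₁) = j₁ ≫ (M ≫ H₂) := by
    rw [← Category.assoc, hM1, ← Category.assoc, hM1]; exact hA
  have f2 : j₂ ≫ (M ≫ H₁) = j₂ ≫ (M ≫ H₂) := by
    rw [← Category.assoc, hM2, ← Category.assoc, hM2]; exact hB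
  obtain ⟨Θ, ⟨hΘ1, hΘ2⟩, hΘ3⟩ := isQ.phase (M ≫ H₁) (M ≫ H₂) f1 f2
  -- θ : m ≫ Θ = θ ≫ m
  have g1 : k₁ ≫ (m ≫ Θ) = k₁ ≫ m := by
    rw [← Category.assoc, hm1, Category.assoc, hΘ1, ← hm1]
  have g2 : k₂ ≫ (m ≫ Θ) = k₂ ≫ m := by
    rw [← Category.assoc, hm2, Category.assoc, hΘ2, ← hm2]
  obtain ⟨θ, ⟨hθ1, hθ2⟩, hθ3⟩ := isJ.phase m (m ≫ Θ) g1.symm g2.symm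
  -- codiagonal ∇ =: nab
  obtain ⟨nab, hn1, hn2⟩ := isJ.lift (𝟙 Gen) (𝟙 Gen)
  -- φ : m ≫ M = φ ≫ (nab ≫ κI)
  have g3 : k₁ ≫ (nab ≫ κI) = k₁ ≫ (m ≫ M) := by
    rw [← Category.assoc, hn1, Category.id_comp, ← Category.assoc, hm1,
      Category.assoc, hM1, ha2]
  have g4 : k₂ ≫ (nab ≫ κI) = k₂ ≫ (m ≫ M) := by
    rw [← Category.assoc, hn2, Category.id_comp, ← Category.assoc, hm2,
      Category.assoc, hM2, hb2]
  obtain ⟨φ, ⟨hφ1, hφ2⟩, hφ3⟩ := isJ.phase (nab ≫ κI) (m ≫ M) g3 g4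
  obtain ⟨φ', ⟨hφ'1, hφ'2⟩, hφφ', hφ'φ⟩ := phase_inv isJ hφ1 hφ2
  -- the ∇-anchored chain
  have hWmono : Mono WιI := (hmono isW).2
  have chain : ((θ ≫ φ) ≫ nab) ≫ WιI = (φ ≫ nab) ≫ WιI := by
    have l1 : m ≫ (M ≫ H₂) = (φ ≫ nab) ≫ WιI := by
      rw [← Category.assoc, hφ3]
      simp only [Category.assoc]
      rw [hH₂]
    have l2 : m ≫ (M ≫ H₂) = ((θ ≫ φ) ≫ nab) ≫ WιI := by
      rw [hΘ3, ← Category.assoc, hθ3]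
      simp only [Category.assoc]
      rw [← Category.assoc m M H₁, hφ3]
      simp only [Category.assoc]
      rw [hH₁]
    rw [← l2, l1]
  have chain2 : (θ ≫ φ) ≫ nab = φ ≫ nab := by
    exact (cancel_mono WιI).mp chain
  have hθφ : θ ≫ φ = φ := by
    refine hgen.phaseMonic isJ nab hn1 hn2 (θ ≫ φ) φ ⟨?_, ?_⟩ ⟨hφ1, hφ2⟩ chain2
    · rw [← Category.assoc, hθ1, hφ1]
    · rw [← Category.assoc, hθ2, hφ2]
  have hθid : θ = 𝟙 J := by
    calc θ = θ ≫ (φ ≫ φ') := by rw [hφφ', Category.comp_id]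
    _ = (θ ≫ φ) ≫ φ' := by rw [Category.assoc]
    _ = φ ≫ φ' := by rw [hθφ]
    _ = 𝟙 J := hφφ'
  have hmΘ : m ≫ Θ = m ≫ 𝟙 Q := by
    rw [hθ3, hθid, Category.id_comp, Category.comp_id]
  -- Mono m via transported structure
  have hPC : IsPhasedCoproduct₂ P J Q sP m :=
    struct_PJQ hcop isP isX isY isJ isQ sP hs1 hs2 m hm1 hm2
  have hmm : Mono m := (hmono hPC).2
  have hΘid : Θ = 𝟙 Q := by
    refine hgen.phaseEpic isJ isQ m hmm ⟨ιIX, hm1⟩ ⟨ιIY, hm2⟩ Θ (𝟙 Q) ⟨hΘ1, hΘ2⟩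
      ⟨Category.comp_id _, Category.comp_id _⟩ hmΘ
  have hMH : M ≫ H₂ = M ≫ H₁ := by rw [hΘ3, hΘid, Category.id_comp]
  haveI := hiso
  calc H₁ = inv (s ≫ M) ≫ ((s ≫ M) ≫ H₁) := by
        rw [← Category.assoc, IsIso.inv_hom_id, Category.id_comp]
  _ = inv (s ≫ M) ≫ (s ≫ (M ≫ H₁)) := by rw [Category.assoc]
  _ = inv (s ≫ M) ≫ (s ≫ (M ≫ H₂)) := by rw [hMH]
  _ = inv (s ≫ M) ≫ ((s ≫ M) ≫ H₂) := by rw [Category.assoc]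
  _ = H₂ := by rw [← Category.assoc, IsIso.inv_hom_id, Category.id_comp]

end Uniq
section Exist

variable {C : Type u} [Category.{v} C]

private lemma exist_lemma {Gen : C} (htrans : PhasesTransitive C)
    {A B P T XT YT D WT : C} {κA : A ⟶ P} {κB : B ⟶ P}
    (isP : IsPhasedCoproduct₂ A B P κA κB)
    {κP : P ⟶ T} {κI : Gen ⟶ T} (isT : IsPhasedCoproduct₂ P Gen T κP κI)
    {ιA : A ⟶ XT} {ιIX : Gen ⟶ XT} (isX : IsPhasedCoproduct₂ A Gen XT ιA ιIX)
    {ιB : B ⟶ YT} {ιIY : Gen ⟶ YT} (isY : IsPhasedCoproduct₂ B Gen YT ιB ιIY)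
    (a : XT ⟶ T) (ha1 : ιA ≫ a = κA ≫ κP) (ha2 : ιIX ≫ a = κI)
    (b : YT ⟶ T) (hb1 : ιB ≫ b = κB ≫ κP) (hb2 : ιIY ≫ b = κI)
    (isAYT : IsPhasedCoproduct₂ A YT T (κA ≫ κP) b)
    (isBXT : IsPhasedCoproduct₂ B XT T (κB ≫ κP) a)
    {Wι : D ⟶ WT} {WιI : Gen ⟶ WT} (isW : IsPhasedCoproduct₂ D Gen WT Wι WιI)
    (F : XT ⟶ WT) (hF : ιIX ≫ F = WιI) {f₀ : A ⟶ D} (hf₀ : ιA ≫ F = f₀ ≫ Wι)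
    (G : YT ⟶ WT) (hG : ιIY ≫ G = WιI) {g₀ : B ⟶ D} (hg₀ : ιB ≫ G = g₀ ≫ Wι) :
    ∃ H : T ⟶ WT, a ≫ H = F ∧ b ≫ H = G ∧ κI ≫ H = WιI ∧
      ∃ t : P ⟶ D, κP ≫ H = t ≫ Wι := by
  obtain ⟨t, ht1, ht2⟩ := isP.lift f₀ g₀
  obtain ⟨H₀, h01, h02⟩ := isT.lift (t ≫ Wι) WιI
  -- a ≫ H₀ = ρA ≫ F
  have cA1 : ιA ≫ F = ιA ≫ (a ≫ H₀) := by
    rw [← Category.assoc, ha1, Category.assoc, h01, ← Category.assoc, ht1, hf₀]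
  have cA2 : ιIX ≫ F = ιIX ≫ (a ≫ H₀) := by
    rw [← Category.assoc, ha2, h02, hF]
  obtain ⟨ρA, ⟨hρA1, hρA2⟩, hρA3⟩ := isX.phase F (a ≫ H₀) cA1 cA2
  -- b ≫ H₀ = ρB ≫ G
  have cB1 : ιB ≫ G = ιB ≫ (b ≫ H₀) := by
    rw [← Category.assoc, hb1, Category.assoc, h01, ← Category.assoc, ht2, hg₀]
  have cB2 : ιIY ≫ G = ιIY ≫ (b ≫ H₀) := by
    rw [← Category.assoc, hb2, h02, hG]
  obtain ⟨ρB, ⟨hρB1, hρB2⟩, hρB3⟩ := isY.phase G (b ≫ H₀) cB1 cB2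
  obtain ⟨ρA', ⟨hρA'1, hρA'2⟩, hAA', hA'A⟩ := phase_inv isX hρA1 hρA2
  obtain ⟨ρB', ⟨hρB'1, hρB'2⟩, hBB', hB'B⟩ := phase_inv isY hρB1 hρB2
  -- Γ : phase of the (A, YT)-structure with ρA' ≫ a = a ≫ Γ
  obtain ⟨Γ, ⟨hΓ1, hΓ2⟩, hΓ3⟩ := htrans isX isAYT a
    ⟨𝟙 A, by rw [ha1, Category.id_comp]⟩
    ⟨ιIY, by rw [ha2, hb2]⟩ ρA' hρA'1 hρA'2
  set H₁ := Γ ≫ H₀ with hH₁def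
  have hAH₁ : a ≫ H₁ = F := by
    rw [hH₁def, ← Category.assoc, ← hΓ3, Category.assoc, hρA3, ← Category.assoc,
      hA'A, Category.id_comp]
  have hBH₁ : b ≫ H₁ = ρB ≫ G := by
    rw [hH₁def, ← Category.assoc, hΓ2, hρB3]
  -- Φ : phase of the (B, XT)-structure with ρB' ≫ b = b ≫ Φ
  obtain ⟨Φ, ⟨hΦ1, hΦ2⟩, hΦ3⟩ := htrans isY isBXT b
    ⟨𝟙 B, by rw [hb1, Category.id_comp]⟩
    ⟨ιIX, by rw [hb2, ha2]⟩ ρB' hρB'1 hρB'2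
  refine ⟨Φ ≫ H₁, ?_, ?_, ?_, ?_⟩
  · rw [← Category.assoc, hΦ2, hAH₁]
  · rw [← Category.assoc, ← hΦ3, Category.assoc, hBH₁, ← Category.assoc,
      hB'B, Category.id_comp]
  · -- κI ≫ (Φ ≫ H₁) = WιI
    have k1 : κI ≫ Φ = κI := by
      rw [← ha2, Category.assoc, hΦ2]
    have k2 : κI ≫ Γ = κI := by
      rw [← hb2, Category.assoc, hΓ2]
    rw [← Category.assoc, k1, hH₁def, ← Category.assoc, k2, h02]
  · -- diagonal component
    have dA : κA ≫ (κP ≫ (Φ ≫ H₁)) = κA ≫ ((t ≫ Wι)) := by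
      have : (κA ≫ κP) ≫ (Φ ≫ H₁) = ιA ≫ F := by
        rw [← ha1, Category.assoc]
        congr 1
        rw [← Category.assoc, hΦ2, hAH₁]
      rw [← Category.assoc, this, hf₀, ← Category.assoc, ht1]
    have dB : κB ≫ (κP ≫ (Φ ≫ H₁)) = κB ≫ ((t ≫ Wι)) := by
      have : (κB ≫ κP) ≫ (Φ ≫ H₁) = ιB ≫ G := by
        rw [← hb1, Category.assoc]
        congr 1
        rw [← Category.assoc, ← hΦ3, Category.assoc, hBH₁, ← Category.assoc,
          hB'B, Category.id_comp]
      rw [← Category.assoc, this, hg₀, ← Category.assoc, ht2]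
    obtain ⟨w, ⟨hw1, hw2⟩, hw3⟩ := isP.phase (t ≫ Wι) (κP ≫ (Φ ≫ H₁)) dA.symm dB.symm
    exact ⟨w ≫ t, by rw [hw3, Category.assoc]⟩

end Exist
/-- if `C` has finite monic phased coproducts with transitive phases and a
phase generator `Gen`, then `GP(C)` has finite coproducts with monic coprojections.
Concretely, any `0 +̇ Gen` with `0` initial is initial in `GP(C)`; and for objects
`Â = A +̇ Gen`, `B̂ = B +̇ Gen` and a phased coproduct `A +̇ B`, any `(A +̇ B) +̇ Gen`
together with the `GP(C)`-morphisms `κ̂A`, `κ̂B` whose diagonal components are the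
coprojections of `A +̇ B` forms a (monic) coproduct of `Â` and `B̂` in `GP(C)`. -/
theorem stmt_8 (Gen : C)
    (hcop : HasPhasedCoproducts₂ C) (hinit : HasInitial C)
    (hmono : MonicPhasedCoproducts C) (htrans : PhasesTransitive C)
    (hgen : IsPhaseGenerator Gen) :
    (∀ Zh : GPObj C Gen, IsInitial Zh.base → Nonempty (IsInitial Zh)) ∧
    (∀ (X Y : GPObj C Gen) (P : C) (κA : X.base ⟶ P) (κB : Y.base ⟶ P),
      IsPhasedCoproduct₂ X.base Y.base P κA κB →
      ∀ (T : C) (κP : P ⟶ T) (κI : Gen ⟶ T) (hT : IsPhasedCoproduct₂ P Gen T κP κI),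
        (∃ iA : X ⟶ (⟨P, T, κP, κI, hT⟩ : GPObj C Gen), GPdiag iA κA) ∧
        (∃ iB : Y ⟶ (⟨P, T, κP, κI, hT⟩ : GPObj C Gen), GPdiag iB κB) ∧
        (∀ (iA : X ⟶ (⟨P, T, κP, κI, hT⟩ : GPObj C Gen))
           (iB : Y ⟶ (⟨P, T, κP, κI, hT⟩ : GPObj C Gen)),
          GPdiag iA κA → GPdiag iB κB →
          Mono iA ∧ Mono iB ∧
          ∀ (W : GPObj C Gen) (f : X ⟶ W) (g : Y ⟶ W),
            ∃! h : (⟨P, T, κP, κI, hT⟩ : GPObj C Gen) ⟶ W, iA ≫ h = f ∧ iB ≫ h = g)) := by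
  constructor
  · -- initial object
    intro Zh hZ
    obtain ⟨d, hd1, hd2⟩ := Zh.isPC.lift (hZ.to Gen) (𝟙 Gen)
    have he : Zh.ι ≫ (d ≫ Zh.ιI) = Zh.ι := hZ.hom_ext _ _
    have he2 : Zh.ιI ≫ (d ≫ Zh.ιI) = Zh.ιI := by
      rw [← Category.assoc, hd2, Category.id_comp]
    obtain ⟨e', _, h1, h2⟩ := phase_inv Zh.isPC he he2
    have hepi : ∀ {E : C} (x y : Zh.tot ⟶ E), Zh.ιI ≫ x = Zh.ιI ≫ y → x = y := by
      intro E x y hxy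
      calc x = (e' ≫ (d ≫ Zh.ιI)) ≫ x := by rw [h2, Category.id_comp]
      _ = (e' ≫ d) ≫ (Zh.ιI ≫ x) := by simp only [Category.assoc]
      _ = (e' ≫ d) ≫ (Zh.ιI ≫ y) := by rw [hxy]
      _ = (e' ≫ (d ≫ Zh.ιI)) ≫ y := by simp only [Category.assoc]
      _ = y := by rw [h2, Category.id_comp]
    refine ⟨IsInitial.ofUniqueHom
      (fun Y => ⟨(Zh.isPC.lift (hZ.to Y.base ≫ Y.ι) Y.ιI).choose,
        (Zh.isPC.lift (hZ.to Y.base ≫ Y.ι) Y.ιI).choose_spec.2,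
        ⟨hZ.to Y.base, (Zh.isPC.lift (hZ.to Y.base ≫ Y.ι) Y.ιI).choose_spec.1⟩⟩)
      (fun Y m => ?_)⟩
    apply GPHom.ext
    refine hepi _ _ ?_
    rw [m.unit, (Zh.isPC.lift (hZ.to Y.base ≫ Y.ι) Y.ιI).choose_spec.2]
  · -- binary coproducts
    intro X Y P κA κB isP T κP κI isT
    obtain ⟨a₀, ha₀1, ha₀2⟩ := X.isPC.lift (κA ≫ κP) κI
    obtain ⟨b₀, hb₀1, hb₀2⟩ := Y.isPC.lift (κB ≫ κP) κI
    refine ⟨⟨⟨a₀, ha₀2, ⟨κA, ha₀1⟩⟩, ha₀1⟩, ⟨⟨b₀, hb₀2, ⟨κB, hb₀1⟩⟩, hb₀1⟩, ?_⟩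
    intro iA iB hdA hdB
    have ha1 : X.ι ≫ iA.f = κA ≫ κP := hdA
    have ha2 : X.ιI ≫ iA.f = κI := iA.unit
    have hb1 : Y.ι ≫ iB.f = κB ≫ κP := hdB
    have hb2 : Y.ιI ≫ iB.f = κI := iB.unit
    have isXTB : IsPhasedCoproduct₂ X.tot Y.base T iA.f (κB ≫ κP) :=
      struct_XTB hcop isP isT X.isPC iA.f ha1 ha2
    have isYTA : IsPhasedCoproduct₂ Y.tot X.base T iB.f (κA ≫ κP) :=
      struct_XTB hcop (pc_swap isP) isT Y.isPC iB.f hb1 hb2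
    have isAYT : IsPhasedCoproduct₂ X.base Y.tot T (κA ≫ κP) iB.f := pc_swap isYTA
    have isBXT : IsPhasedCoproduct₂ Y.base X.tot T (κB ≫ κP) iA.f := pc_swap isXTB
    have hMa : Mono iA.f := (hmono isXTB).1
    have hMb : Mono iB.f := (hmono isYTA).1
    refine ⟨⟨fun {Z} u v huv => ?_⟩, ⟨fun {Z} u v huv => ?_⟩, ?_⟩
    · apply GPHom.ext
      have h2 : u.f ≫ iA.f = v.f ≫ iA.f := congrArg GPHom.f huv
      exact hMa.right_cancellation _ _ h2
    · apply GPHom.ext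
      have h2 : u.f ≫ iB.f = v.f ≫ iB.f := congrArg GPHom.f huv
      exact hMb.right_cancellation _ _ h2
    · intro W f g
      obtain ⟨fd, hfd⟩ := f.diag
      obtain ⟨gd, hgd⟩ := g.diag
      obtain ⟨H, hHa, hHb, hHI, t, hHt⟩ := exist_lemma htrans isP isT X.isPC Y.isPC
        iA.f ha1 ha2 iB.f hb1 hb2 isAYT isBXT W.isPC f.f f.unit hfd g.f g.unit hgd
      refine ⟨⟨H, hHI, ⟨t, hHt⟩⟩, ⟨GPHom.ext hHa, GPHom.ext hHb⟩, ?_⟩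
      rintro h' ⟨e1, e2⟩
      apply GPHom.ext
      have eA : iA.f ≫ h'.f = iA.f ≫ H := by
        have := congrArg GPHom.f e1
        exact this.trans hHa.symm
      have eB : iB.f ≫ h'.f = iB.f ≫ H := by
        have := congrArg GPHom.f e2
        exact this.trans hHb.symm
      exact uniq_lemma hcop hmono hgen isP isT X.isPC Y.isPC iA.f ha1 ha2 iB.f hb1 hb2
        W.isPC h'.f H h'.unit hHI eA eB
end

section
/- Let C be a monoidal category with distributive finite coproducts and a choice of global phases P. Then the tensor product of C descends to the quotient C_P, making C_P a monoidal category, and C_P has distributive finite phased coproducts with transitive phases (the images of coproducts of C being phased coproducts of C_P). -/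
open CategoryTheory CategoryTheory.Limits

universe v u

variable {C : Type u} [Category.{v} C]

open MonoidalCategory

section Monoidal

variable {C : Type u} [Category.{v} C] [MonoidalCategory C]

/-- Left action of a scalar on a morphism: `s·f`. -/
def lact (s : 𝟙_ C ⟶ 𝟙_ C) {A B : C} (f : A ⟶ B) : A ⟶ B :=
  (λ_ A).inv ≫ (s ⊗ₘ f) ≫ (λ_ B).hom

/-- Right action of a scalar on a morphism: `f·s`. -/
def ract (s : 𝟙_ C ⟶ 𝟙_ C) {A B : C} (f : A ⟶ B) : A ⟶ B :=
  (ρ_ A).inv ≫ (f ⊗ₘ s) ≫ (ρ_ B).hom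

/-- A scalar is central when its left and right actions agree on every morphism. -/
def Central (s : 𝟙_ C ⟶ 𝟙_ C) : Prop :=
  ∀ {A B : C} (f : A ⟶ B), lact s f = ract s f

/-- A choice of global phases: a set of invertible central scalars closed under
composition and inverses (in particular a group of scalars). -/
structure IsGlobalPhases (P : Set (𝟙_ C ⟶ 𝟙_ C)) : Prop where
  central : ∀ u ∈ P, Central u
  id_mem : 𝟙 (𝟙_ C) ∈ P
  comp_mem : ∀ u ∈ P, ∀ v ∈ P, u ≫ v ∈ P
  inv_mem : ∀ u ∈ P, ∃ v ∈ P, u ≫ v = 𝟙 (𝟙_ C) ∧ v ≫ u = 𝟙 (𝟙_ C)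

/-- The congruence induced by a choice of global phases: `f ∼ g` iff `f = u·g`. -/
def gpRel (P : Set (𝟙_ C ⟶ 𝟙_ C)) : HomRel C :=
  fun {_ _} f g => ∃ u ∈ P, f = lact u g

/-- Distributivity of binary phased coproducts in a monoidal category: the functors
`A ⊗ (−)` and `(−) ⊗ A` strongly preserve phased coproducts. -/
def DistribPhasedCoproducts (C : Type u) [Category.{v} C] [MonoidalCategory C] : Prop :=
  ∀ (A : C) {B₁ B₂ P : C} {κ₁ : B₁ ⟶ P} {κ₂ : B₂ ⟶ P},
    IsPhasedCoproduct₂ B₁ B₂ P κ₁ κ₂ →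
    (IsPhasedCoproduct₂ (A ⊗ B₁) (A ⊗ B₂) (A ⊗ P) (A ◁ κ₁) (A ◁ κ₂) ∧
      ∀ W : A ⊗ P ⟶ A ⊗ P, (A ◁ κ₁) ≫ W = A ◁ κ₁ → (A ◁ κ₂) ≫ W = A ◁ κ₂ →
        ∃ U : P ⟶ P, (κ₁ ≫ U = κ₁ ∧ κ₂ ≫ U = κ₂) ∧ W = A ◁ U) ∧
    (IsPhasedCoproduct₂ (B₁ ⊗ A) (B₂ ⊗ A) (P ⊗ A) (κ₁ ▷ A) (κ₂ ▷ A) ∧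
      ∀ W : P ⊗ A ⟶ P ⊗ A, (κ₁ ▷ A) ≫ W = κ₁ ▷ A → (κ₂ ▷ A) ≫ W = κ₂ ▷ A →
        ∃ U : P ⟶ P, (κ₁ ≫ U = κ₁ ∧ κ₂ ≫ U = κ₂) ∧ W = U ▷ A)

/-- Distributivity of binary (actual) coproducts in a monoidal category. -/
def DistribCoproducts (C : Type u) [Category.{v} C] [MonoidalCategory C] : Prop :=
  ∀ (A : C) {B₁ B₂ P : C} {κ₁ : B₁ ⟶ P} {κ₂ : B₂ ⟶ P},
    IsCoproduct₂ B₁ B₂ P κ₁ κ₂ →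
    IsCoproduct₂ (A ⊗ B₁) (A ⊗ B₂) (A ⊗ P) (A ◁ κ₁) (A ◁ κ₂) ∧
    IsCoproduct₂ (B₁ ⊗ A) (B₂ ⊗ A) (P ⊗ A) (κ₁ ▷ A) (κ₂ ▷ A)

/-- All coprojections of binary coproducts are monic. -/
def MonicCoproducts (C : Type u) [Category.{v} C] : Prop :=
  ∀ {A B P : C} {κA : A ⟶ P} {κB : B ⟶ P}, IsCoproduct₂ A B P κA κB → Mono κA ∧ Mono κB

end Monoidal

variable [MonoidalCategory C]

/-- The compatibilities expressing that a monoidal structure on the quotient `C_P` is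
the one descended from `C` (the quotient functor is strict monoidal), together with
the phased-coproduct structure of the quotient. -/
structure QuotMonCompat (C : Type u) [Category.{v} C] [MonoidalCategory C]
    (P : Set (𝟙_ C ⟶ 𝟙_ C)) [M : MonoidalCategory (Quotient (gpRel P))] : Prop where
  hunit : 𝟙_ (Quotient (gpRel P)) = (Quotient.functor (gpRel P)).obj (𝟙_ C)
  hobj : ∀ X Y : C,
    (Quotient.functor (gpRel P)).obj X ⊗ (Quotient.functor (gpRel P)).obj Y
      = (Quotient.functor (gpRel P)).obj (X ⊗ Y)
  htens : ∀ {X X' Y Y' : C} (f : X ⟶ X') (g : Y ⟶ Y'),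
    (Quotient.functor (gpRel P)).map f ⊗ₘ (Quotient.functor (gpRel P)).map g
      = eqToHom (hobj X Y) ≫ (Quotient.functor (gpRel P)).map (f ⊗ₘ g) ≫
          eqToHom (hobj X' Y').symm
  hassoc : ∀ X Y Z : C,
    (α_ ((Quotient.functor (gpRel P)).obj X) ((Quotient.functor (gpRel P)).obj Y)
        ((Quotient.functor (gpRel P)).obj Z)).hom
      = eqToHom ((congrArg (· ⊗ (Quotient.functor (gpRel P)).obj Z) (hobj X Y)).trans
            (hobj (X ⊗ Y) Z)) ≫
        (Quotient.functor (gpRel P)).map (α_ X Y Z).hom ≫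
        eqToHom ((congrArg ((Quotient.functor (gpRel P)).obj X ⊗ ·) (hobj Y Z)).trans
            (hobj X (Y ⊗ Z))).symm
  hlam : ∀ X : C,
    (λ_ ((Quotient.functor (gpRel P)).obj X)).hom
      = eqToHom ((congrArg (· ⊗ (Quotient.functor (gpRel P)).obj X) hunit).trans
            (hobj (𝟙_ C) X)) ≫ (Quotient.functor (gpRel P)).map (λ_ X).hom
  hrho : ∀ X : C,
    (ρ_ ((Quotient.functor (gpRel P)).obj X)).hom
      = eqToHom ((congrArg ((Quotient.functor (gpRel P)).obj X ⊗ ·) hunit).trans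
            (hobj X (𝟙_ C))) ≫ (Quotient.functor (gpRel P)).map (ρ_ X).hom
  himg : ∀ {A B Q : C} {κA : A ⟶ Q} {κB : B ⟶ Q}, IsCoproduct₂ A B Q κA κB →
    IsPhasedCoproduct₂ ((Quotient.functor (gpRel P)).obj A)
      ((Quotient.functor (gpRel P)).obj B) ((Quotient.functor (gpRel P)).obj Q)
      ((Quotient.functor (gpRel P)).map κA) ((Quotient.functor (gpRel P)).map κB)
  hinitial : ∀ Z : C, IsInitial Z →
    Nonempty (IsInitial ((Quotient.functor (gpRel P)).obj Z))
  hhas : HasPhasedCoproducts₂ (Quotient (gpRel P))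
  hdistQ : DistribPhasedCoproducts (Quotient (gpRel P))
  htransQ : PhasesTransitive (Quotient (gpRel P))

namespace Stmt10Aux

section LactLemmas

variable {C : Type u} [Category.{v} C] [MonoidalCategory C]

theorem lact_id {A B : C} (f : A ⟶ B) : lact (𝟙 (𝟙_ C)) f = f := by
  show (λ_ A).inv ≫ (𝟙 (𝟙_ C) ⊗ₘ f) ≫ (λ_ B).hom = f
  rw [MonoidalCategory.id_tensorHom]
  exact (MonoidalCategory.id_whiskerLeft_symm f).symm

theorem comp_lact (s : 𝟙_ C ⟶ 𝟙_ C) {A B D : C} (f : A ⟶ B) (g : B ⟶ D) :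
    f ≫ lact s g = lact s (f ≫ g) := by
  simp only [lact]
  rw [show s ⊗ₘ (f ≫ g) = (𝟙 _ ⊗ₘ f) ≫ (s ⊗ₘ g) by
    rw [MonoidalCategory.tensorHom_comp_tensorHom]; simp]
  rw [MonoidalCategory.id_tensorHom, MonoidalCategory.leftUnitor_inv_naturality_assoc]
  simp only [Category.assoc]

theorem lact_comp (s : 𝟙_ C ⟶ 𝟙_ C) {A B D : C} (f : A ⟶ B) (g : B ⟶ D) :
    lact s f ≫ g = lact s (f ≫ g) := by
  simp only [lact]
  rw [show s ⊗ₘ (f ≫ g) = (s ⊗ₘ f) ≫ (𝟙 _ ⊗ₘ g) by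
    rw [MonoidalCategory.tensorHom_comp_tensorHom]; simp]
  rw [MonoidalCategory.id_tensorHom]
  simp only [Category.assoc, MonoidalCategory.leftUnitor_naturality]

theorem lact_id_endo (s : 𝟙_ C ⟶ 𝟙_ C) (A : C) :
    lact s (𝟙 A) = (λ_ A).inv ≫ s ▷ A ≫ (λ_ A).hom := by
  simp [lact, MonoidalCategory.tensorHom_id]

theorem lact_lact (s t : 𝟙_ C ⟶ 𝟙_ C) {A B : C} (f : A ⟶ B) :
    lact s (lact t f) = lact (s ≫ t) f := by
  have h1 : ∀ {B' : C} (u : 𝟙_ C ⟶ 𝟙_ C) (g : A ⟶ B'), lact u g = lact u (𝟙 A) ≫ g := by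
    intro B' u g
    rw [lact_comp, Category.id_comp]
  rw [h1 t f, h1 s (lact t (𝟙 A) ≫ f), h1 (s ≫ t) f, ← Category.assoc]
  congr 1
  rw [lact_id_endo, lact_id_endo, lact_id_endo]
  simp only [Category.assoc, Iso.hom_inv_id_assoc]
  rw [MonoidalCategory.comp_whiskerRight]
  simp only [Category.assoc]

theorem lact_tensor (s : 𝟙_ C ⟶ 𝟙_ C) {A A' B B' : C} (f : A ⟶ A') (g : B ⟶ B') :
    lact s f ⊗ₘ g = lact s (f ⊗ₘ g) := by
  simp only [lact]
  rw [show ((λ_ A).inv ≫ (s ⊗ₘ f) ≫ (λ_ A').hom) ⊗ₘ g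
      = ((λ_ A).inv ⊗ₘ 𝟙 B) ≫ ((s ⊗ₘ f) ⊗ₘ g) ≫ ((λ_ A').hom ⊗ₘ 𝟙 B') by
    rw [MonoidalCategory.tensorHom_comp_tensorHom, MonoidalCategory.tensorHom_comp_tensorHom]; simp]
  rw [MonoidalCategory.tensorHom_id, MonoidalCategory.tensorHom_id,
    MonoidalCategory.leftUnitor_tensor_inv, MonoidalCategory.leftUnitor_tensor_hom,
    MonoidalCategory.associator_inv_naturality_assoc]
  simp

theorem ract_tensor (s : 𝟙_ C ⟶ 𝟙_ C) {A A' B B' : C} (f : A ⟶ A') (g : B ⟶ B') :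
    f ⊗ₘ ract s g = ract s (f ⊗ₘ g) := by
  simp only [ract]
  rw [show f ⊗ₘ ((ρ_ B).inv ≫ (g ⊗ₘ s) ≫ (ρ_ B').hom)
      = (𝟙 A ⊗ₘ (ρ_ B).inv) ≫ (f ⊗ₘ (g ⊗ₘ s)) ≫ (𝟙 A' ⊗ₘ (ρ_ B').hom) by
    rw [MonoidalCategory.tensorHom_comp_tensorHom, MonoidalCategory.tensorHom_comp_tensorHom]; simp]
  rw [MonoidalCategory.id_tensorHom, MonoidalCategory.id_tensorHom,
    MonoidalCategory.rightUnitor_tensor_inv, MonoidalCategory.rightUnitor_tensor_hom]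
  rw [show (f ⊗ₘ g) ⊗ₘ s = (α_ A B (𝟙_ C)).hom ≫ (f ⊗ₘ (g ⊗ₘ s)) ≫ (α_ A' B' (𝟙_ C)).inv from
    MonoidalCategory.associator_conjugation f g s]
  simp

theorem tensor_lact {s : 𝟙_ C ⟶ 𝟙_ C} (hs : Central s) {A A' B B' : C}
    (f : A ⟶ A') (g : B ⟶ B') : f ⊗ₘ lact s g = lact s (f ⊗ₘ g) := by
  rw [hs g, ract_tensor, ← hs (f ⊗ₘ g)]

theorem whiskerLeft_lact {s : 𝟙_ C ⟶ 𝟙_ C} (hs : Central s) (A : C) {B B' : C}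
    (g : B ⟶ B') : A ◁ lact s g = lact s (A ◁ g) := by
  rw [← MonoidalCategory.id_tensorHom, ← MonoidalCategory.id_tensorHom,
    tensor_lact hs]

theorem whiskerRight_lact (s : 𝟙_ C ⟶ 𝟙_ C) {B B' : C} (g : B ⟶ B') (A : C) :
    lact s g ▷ A = lact s (g ▷ A) := by
  rw [← MonoidalCategory.tensorHom_id, ← MonoidalCategory.tensorHom_id,
    lact_tensor]

variable {P : Set (𝟙_ C ⟶ 𝟙_ C)}

theorem gpRel_refl (hP : IsGlobalPhases P) {A B : C} (f : A ⟶ B) : gpRel P f f :=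
  ⟨𝟙 _, hP.id_mem, (lact_id f).symm⟩

theorem gpRel_tensor (hP : IsGlobalPhases P) {X X' Y Y' : C} {f f' : X ⟶ X'}
    {g g' : Y ⟶ Y'} (hf : gpRel P f f') (hg : gpRel P g g') :
    gpRel P (f ⊗ₘ g) (f' ⊗ₘ g') := by
  obtain ⟨u, hu, rfl⟩ := hf
  obtain ⟨v, hv, rfl⟩ := hg
  exact ⟨u ≫ v, hP.comp_mem u hu v hv, by
    rw [lact_tensor, tensor_lact (hP.central v hv), lact_lact]⟩

theorem gpCongruence (hP : IsGlobalPhases P) : Congruence (gpRel P) where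
  equivalence := by
    intro X Y
    constructor
    · exact fun f => gpRel_refl hP f
    · rintro f g ⟨u, hu, rfl⟩
      obtain ⟨v, hv, huv, hvu⟩ := hP.inv_mem u hu
      exact ⟨v, hv, by rw [lact_lact, hvu, lact_id]⟩
    · rintro f g h ⟨u, hu, rfl⟩ ⟨v, hv, rfl⟩
      exact ⟨u ≫ v, hP.comp_mem u hu v hv, lact_lact u v h⟩
  comp_left := by
    rintro X Y Z f g g' ⟨u, hu, rfl⟩
    exact ⟨u, hu, comp_lact u f g'⟩
  comp_right := by
    rintro X Y Z f f' g ⟨u, hu, rfl⟩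
    exact ⟨u, hu, lact_comp u f' g⟩

end LactLemmas

section QuotMonoidal

variable {C : Type u} [Category.{v} C] [MonoidalCategory C]
variable (P : Set (𝟙_ C ⟶ 𝟙_ C)) (hP : IsGlobalPhases P)

/-- Tensor of morphisms in the quotient. -/
def qtensor (hP : IsGlobalPhases P) {X₁ Y₁ X₂ Y₂ : C}
    (f : (⟨X₁⟩ : Quotient (gpRel P)) ⟶ ⟨Y₁⟩)
    (g : (⟨X₂⟩ : Quotient (gpRel P)) ⟶ ⟨Y₂⟩) :
    (⟨X₁ ⊗ X₂⟩ : Quotient (gpRel P)) ⟶ ⟨Y₁ ⊗ Y₂⟩ := by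
  refine Quot.lift₂ (fun f₀ g₀ => Quot.mk _ (MonoidalCategory.tensorHom f₀ g₀)) ?_ ?_ f g
  · intro f₀ g₁ g₂ h
    haveI := gpCongruence hP
    rw [HomRel.compClosure_iff_self] at h
    exact Quot.sound (by
      rw [HomRel.compClosure_iff_self]
      exact gpRel_tensor hP (gpRel_refl hP f₀) h)
  · intro f₁ f₂ g₀ h
    haveI := gpCongruence hP
    rw [HomRel.compClosure_iff_self] at h
    exact Quot.sound (by
      rw [HomRel.compClosure_iff_self]
      exact gpRel_tensor hP h (gpRel_refl hP g₀))

/-- The descended monoidal structure on the quotient. -/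
def qStruct (hP : IsGlobalPhases P) : MonoidalCategoryStruct (Quotient (gpRel P)) where
  tensorObj X Y := ⟨X.as ⊗ Y.as⟩
  tensorHom f g := qtensor P hP f g
  whiskerLeft X _ _ f := qtensor P hP (𝟙 X) f
  whiskerRight f Y := qtensor P hP f (𝟙 Y)
  tensorUnit := ⟨𝟙_ C⟩
  associator X Y Z := (Quotient.functor (gpRel P)).mapIso (α_ X.as Y.as Z.as)
  leftUnitor X := (Quotient.functor (gpRel P)).mapIso (λ_ X.as)
  rightUnitor X := (Quotient.functor (gpRel P)).mapIso (ρ_ X.as)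

/-- The descended monoidal category structure on the quotient. -/
def qMon (hP : IsGlobalPhases P) : MonoidalCategory (Quotient (gpRel P)) :=
  letI := qStruct P hP
  MonoidalCategory.ofTensorHom
    (id_tensorHom_id := by
      rintro ⟨X₁⟩ ⟨X₂⟩
      exact congrArg (Quotient.functor (gpRel P)).map (MonoidalCategory.id_tensorHom_id X₁ X₂))
    (id_tensorHom := by intros; rfl)
    (tensorHom_id := by intros; rfl)
    (tensorHom_comp_tensorHom := by
      rintro ⟨X₁⟩ ⟨Y₁⟩ ⟨Z₁⟩ ⟨X₂⟩ ⟨Y₂⟩ ⟨Z₂⟩ ⟨f₁⟩ ⟨f₂⟩ ⟨g₁⟩ ⟨g₂⟩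
      exact congrArg (Quotient.functor (gpRel P)).map (MonoidalCategory.tensorHom_comp_tensorHom f₁ f₂ g₁ g₂))
    (associator_naturality := by
      rintro ⟨X₁⟩ ⟨X₂⟩ ⟨X₃⟩ ⟨Y₁⟩ ⟨Y₂⟩ ⟨Y₃⟩ ⟨f₁⟩ ⟨f₂⟩ ⟨f₃⟩
      exact congrArg (Quotient.functor (gpRel P)).map (MonoidalCategory.associator_naturality f₁ f₂ f₃))
    (leftUnitor_naturality := by
      rintro ⟨X⟩ ⟨Y⟩ ⟨f⟩
      refine congrArg (Quotient.functor (gpRel P)).map ?_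
      dsimp only
      rw [MonoidalCategory.id_tensorHom]
      exact MonoidalCategory.leftUnitor_naturality f)
    (rightUnitor_naturality := by
      rintro ⟨X⟩ ⟨Y⟩ ⟨f⟩
      refine congrArg (Quotient.functor (gpRel P)).map ?_
      dsimp only
      rw [MonoidalCategory.tensorHom_id]
      exact MonoidalCategory.rightUnitor_naturality f)
    (pentagon := by
      rintro ⟨W⟩ ⟨X⟩ ⟨Y⟩ ⟨Z⟩
      refine congrArg (Quotient.functor (gpRel P)).map ?_
      dsimp only
      have h := MonoidalCategory.pentagon W X Y Z
      rw [← MonoidalCategory.tensorHom_id, ← MonoidalCategory.id_tensorHom] at h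
      exact h)
    (triangle := by
      rintro ⟨X⟩ ⟨Y⟩
      refine congrArg (Quotient.functor (gpRel P)).map ?_
      dsimp only
      have h := MonoidalCategory.triangle X Y
      rw [← MonoidalCategory.id_tensorHom, ← MonoidalCategory.tensorHom_id] at h
      exact h)

end QuotMonoidal

section GenCat

variable {D : Type*} [Category D] {A B Q Q' : D} {κA : A ⟶ Q} {κB : B ⟶ Q}
  {κA' : A ⟶ Q'} {κB' : B ⟶ Q'}

/-- Endomorphisms of a phased coproduct fixing the coprojections are invertible. -/
theorem pc_fix_inv (c : IsPhasedCoproduct₂ A B Q κA κB) {e : Q ⟶ Q}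
    (h1 : κA ≫ e = κA) (h2 : κB ≫ e = κB) :
    ∃ e' : Q ⟶ Q, (κA ≫ e' = κA ∧ κB ≫ e' = κB) ∧ e ≫ e' = 𝟙 Q ∧ e' ≫ e = 𝟙 Q := by
  obtain ⟨V, ⟨hV1, hV2⟩, hV⟩ := c.phase e (𝟙 Q) (by rw [h1, Category.comp_id])
    (by rw [h2, Category.comp_id])
  obtain ⟨W, ⟨_, _⟩, hW⟩ := c.phase V (𝟙 Q) (by rw [hV1, Category.comp_id])
    (by rw [hV2, Category.comp_id])
  have heW : e = W := by
    calc e = 𝟙 Q ≫ e := (Category.id_comp e).symm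
    _ = (W ≫ V) ≫ e := by rw [← hW]
    _ = W ≫ (V ≫ e) := Category.assoc _ _ _
    _ = W := by rw [← hV, Category.comp_id]
  exact ⟨V, ⟨hV1, hV2⟩, by rw [heW, ← hW], hV.symm⟩

/-- Transport a phased coproduct along an isomorphism. -/
theorem pc_transport (c : IsPhasedCoproduct₂ A B Q κA κB) (φ : Q ⟶ Q') (ψ : Q' ⟶ Q)
    (hφψ : φ ≫ ψ = 𝟙 Q) (hψφ : ψ ≫ φ = 𝟙 Q') :
    IsPhasedCoproduct₂ A B Q' (κA ≫ φ) (κB ≫ φ) where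
  lift f g := by
    obtain ⟨h, hA, hB⟩ := c.lift f g
    exact ⟨ψ ≫ h, by rw [Category.assoc, ← Category.assoc φ, hφψ,
      Category.id_comp, hA], by rw [Category.assoc, ← Category.assoc φ, hφψ,
      Category.id_comp, hB]⟩
  phase h h' e1 e2 := by
    obtain ⟨U, ⟨hU1, hU2⟩, hU⟩ := c.phase (φ ≫ h) (φ ≫ h')
      (by rw [← Category.assoc, ← Category.assoc]; exact e1)
      (by rw [← Category.assoc, ← Category.assoc]; exact e2)
    refine ⟨ψ ≫ U ≫ φ, ⟨?_, ?_⟩, ?_⟩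
    · rw [Category.assoc, ← Category.assoc φ, hφψ, Category.id_comp,
        ← Category.assoc, hU1]
    · rw [Category.assoc, ← Category.assoc φ, hφψ, Category.id_comp,
        ← Category.assoc, hU2]
    · calc h' = (ψ ≫ φ) ≫ h' := by rw [hψφ, Category.id_comp]
      _ = ψ ≫ (U ≫ (φ ≫ h)) := by rw [Category.assoc, hU]
      _ = (ψ ≫ U ≫ φ) ≫ h := by simp only [Category.assoc]

/-- Comparison isomorphism between two phased coproducts of the same objects. -/
theorem pc_compare (c : IsPhasedCoproduct₂ A B Q κA κB)
    (c' : IsPhasedCoproduct₂ A B Q' κA' κB') :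
    ∃ (φ : Q ⟶ Q') (ψ : Q' ⟶ Q), κA ≫ φ = κA' ∧ κB ≫ φ = κB' ∧
      κA' ≫ ψ = κA ∧ κB' ≫ ψ = κB ∧ φ ≫ ψ = 𝟙 Q ∧ ψ ≫ φ = 𝟙 Q' := by
  obtain ⟨φ, hφ1, hφ2⟩ := c.lift κA' κB'
  obtain ⟨ψ, hψ1, hψ2⟩ := c'.lift κA κB
  have e1 : κA ≫ (φ ≫ ψ) = κA := by rw [← Category.assoc, hφ1, hψ1]
  have e2 : κB ≫ (φ ≫ ψ) = κB := by rw [← Category.assoc, hφ2, hψ2]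
  have e1' : κA' ≫ (ψ ≫ φ) = κA' := by rw [← Category.assoc, hψ1, hφ1]
  have e2' : κB' ≫ (ψ ≫ φ) = κB' := by rw [← Category.assoc, hψ2, hφ2]
  obtain ⟨e', ⟨he1, he2⟩, he3, he4⟩ := pc_fix_inv c e1 e2
  obtain ⟨d', ⟨hd1, hd2⟩, hd3, hd4⟩ := pc_fix_inv c' e1' e2'
  refine ⟨φ, ψ ≫ e', hφ1, hφ2, ?_, ?_, ?_, ?_⟩
  · rw [← Category.assoc, hψ1, he1]
  · rw [← Category.assoc, hψ2, he2]
  · rw [← Category.assoc]; exact he3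
  · have h5 : ψ ≫ e' = d' ≫ ψ := by
      calc ψ ≫ e' = 𝟙 Q' ≫ (ψ ≫ e') := (Category.id_comp _).symm
      _ = (d' ≫ (ψ ≫ φ)) ≫ (ψ ≫ e') := by rw [← hd4]
      _ = d' ≫ ψ ≫ ((φ ≫ ψ) ≫ e') := by simp only [Category.assoc]
      _ = d' ≫ ψ ≫ 𝟙 Q := by rw [he3]
      _ = d' ≫ ψ := by rw [Category.comp_id]
    rw [h5, Category.assoc, hd4]

end GenCat

end Stmt10Aux

/-- for a monoidal category `C` with distributive finite coproducts and
a choice of global phases `P`, the tensor descends to the quotient `C_P`, which becomes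
a monoidal category with distributive finite phased coproducts with transitive phases,
the images of coproducts being phased coproducts. -/
theorem stmt_10 [HasInitial C]
    (hcop : ∀ A B : C, ∃ (Q : C) (κA : A ⟶ Q) (κB : B ⟶ Q), IsCoproduct₂ A B Q κA κB)
    (hdist : DistribCoproducts C)
    (P : Set (𝟙_ C ⟶ 𝟙_ C)) (hP : IsGlobalPhases P) :
    (∀ {X X' Y Y' : C} (f f' : X ⟶ X') (g g' : Y ⟶ Y'),
      gpRel P f f' → gpRel P g g' → gpRel P (f ⊗ₘ g) (f' ⊗ₘ g')) ∧
    ∃ M : MonoidalCategory (Quotient (gpRel P)), QuotMonCompat C P (M := M) := by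
  haveI := Stmt10Aux.gpCongruence hP
  constructor
  · intro X X' Y Y' f f' g g' hf hg
    exact Stmt10Aux.gpRel_tensor hP hf hg
  letI M : MonoidalCategory (Quotient (gpRel P)) := Stmt10Aux.qMon P hP
  refine ⟨M, ?_⟩
  -- basic facts about the quotient functor
  have hmapeq : ∀ {X Y : C} (f g : X ⟶ Y),
      (Quotient.functor (gpRel P)).map f = (Quotient.functor (gpRel P)).map g ↔ gpRel P f g := fun f g =>
    Quotient.functor_map_eq_iff (gpRel P) f g
  have hrep : ∀ {X Y : Quotient (gpRel P)} (f : X ⟶ Y),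
      ∃ f₀ : X.as ⟶ Y.as, f = (Quotient.functor (gpRel P)).map f₀ := by
    intro X Y f
    obtain ⟨f₀, hf₀⟩ := Quot.exists_rep f
    exact ⟨f₀, hf₀.symm⟩
  have hwl : ∀ (X : Quotient (gpRel P)) {Y Y' : C} (f : Y ⟶ Y'),
      X ◁ ((Quotient.functor (gpRel P)).map f) = (Quotient.functor (gpRel P)).map (X.as ◁ f) := by
    intro X Y Y' f
    exact congrArg (Quotient.functor (gpRel P)).map (MonoidalCategory.id_tensorHom X.as f)
  have hwr : ∀ {Y Y' : C} (f : Y ⟶ Y') (X : Quotient (gpRel P)),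
      ((Quotient.functor (gpRel P)).map f) ▷ X = (Quotient.functor (gpRel P)).map (f ▷ X.as) := by
    intro Y Y' f X
    exact congrArg (Quotient.functor (gpRel P)).map (MonoidalCategory.tensorHom_id f X.as)
  -- the images of coproducts are phased coproducts
  have himg0 : ∀ {A B Q : C} {κA : A ⟶ Q} {κB : B ⟶ Q}, IsCoproduct₂ A B Q κA κB →
      IsPhasedCoproduct₂ ((Quotient.functor (gpRel P)).obj A) ((Quotient.functor (gpRel P)).obj B) ((Quotient.functor (gpRel P)).obj Q) ((Quotient.functor (gpRel P)).map κA) ((Quotient.functor (gpRel P)).map κB) := by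
    intro A B Q κA κB hc
    constructor
    · intro D f g
      obtain ⟨f₀, rfl⟩ := hrep f
      obtain ⟨g₀, rfl⟩ := hrep g
      obtain ⟨h₀, ⟨hA, hB⟩, -⟩ := hc f₀ g₀
      exact ⟨(Quotient.functor (gpRel P)).map h₀, by rw [← (Quotient.functor (gpRel P)).map_comp, hA], by rw [← (Quotient.functor (gpRel P)).map_comp, hB]⟩
    · intro D h h' e1 e2
      obtain ⟨h₀, rfl⟩ := hrep h
      obtain ⟨h₀', rfl⟩ := hrep h'
      rw [← (Quotient.functor (gpRel P)).map_comp, ← (Quotient.functor (gpRel P)).map_comp, hmapeq] at e1 e2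
      obtain ⟨u, hu, hu'⟩ := (Stmt10Aux.gpCongruence hP).equivalence.symm e1
      obtain ⟨v, hv, hv'⟩ := (Stmt10Aux.gpCongruence hP).equivalence.symm e2
      rw [← Stmt10Aux.lact_comp] at hu' hv'
      obtain ⟨U₀, ⟨hUA, hUB⟩, -⟩ := hc (lact u κA) (lact v κB)
      have hcomp : U₀ ≫ h₀ = h₀' :=
        ExistsUnique.unique (hc (κA ≫ h₀') (κB ≫ h₀'))
          ⟨by rw [← Category.assoc, hUA, ← hu'], by rw [← Category.assoc, hUB, ← hv']⟩
          ⟨rfl, rfl⟩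
      refine ⟨(Quotient.functor (gpRel P)).map U₀, ⟨?_, ?_⟩, ?_⟩
      · rw [← (Quotient.functor (gpRel P)).map_comp, hUA, hmapeq]
        exact ⟨u, hu, rfl⟩
      · rw [← (Quotient.functor (gpRel P)).map_comp, hUB, hmapeq]
        exact ⟨v, hv, rfl⟩
      · rw [← (Quotient.functor (gpRel P)).map_comp, hcomp]
  -- characterization of phases of image coproducts
  have hphase_img : ∀ {A B Q : C} {ι₁ : A ⟶ Q} {ι₂ : B ⟶ Q}, IsCoproduct₂ A B Q ι₁ ι₂ →
      ∀ (W : (Quotient.functor (gpRel P)).obj Q ⟶ (Quotient.functor (gpRel P)).obj Q), (Quotient.functor (gpRel P)).map ι₁ ≫ W = (Quotient.functor (gpRel P)).map ι₁ →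
        (Quotient.functor (gpRel P)).map ι₂ ≫ W = (Quotient.functor (gpRel P)).map ι₂ →
      ∃ (w : Q ⟶ Q) (u v : 𝟙_ C ⟶ 𝟙_ C), u ∈ P ∧ v ∈ P ∧ W = (Quotient.functor (gpRel P)).map w ∧
        ι₁ ≫ w = lact u ι₁ ∧ ι₂ ≫ w = lact v ι₂ := by
    intro A B Q ι₁ ι₂ hc W e1 e2
    obtain ⟨w, rfl⟩ := hrep W
    rw [← (Quotient.functor (gpRel P)).map_comp, hmapeq] at e1 e2
    obtain ⟨u, hu, hu'⟩ := e1
    obtain ⟨v, hv, hv'⟩ := e2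
    exact ⟨w, u, v, hu, hv, rfl, hu', hv'⟩
  -- comparison of arbitrary phased coproducts in the quotient with image coproducts
  have hcmp : ∀ {B₁ B₂ Pq : Quotient (gpRel P)} {κ₁ : B₁ ⟶ Pq} {κ₂ : B₂ ⟶ Pq},
      IsPhasedCoproduct₂ B₁ B₂ Pq κ₁ κ₂ →
      ∃ (Q : C) (ι₁ : B₁.as ⟶ Q) (ι₂ : B₂.as ⟶ Q),
        IsCoproduct₂ B₁.as B₂.as Q ι₁ ι₂ ∧
        ∃ (φ : (Quotient.functor (gpRel P)).obj Q ⟶ Pq) (ψ : Pq ⟶ (Quotient.functor (gpRel P)).obj Q),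
          (Quotient.functor (gpRel P)).map ι₁ ≫ φ = κ₁ ∧ (Quotient.functor (gpRel P)).map ι₂ ≫ φ = κ₂ ∧
          φ ≫ ψ = 𝟙 ((Quotient.functor (gpRel P)).obj Q) ∧ ψ ≫ φ = 𝟙 Pq := by
    intro B₁ B₂ Pq κ₁ κ₂ c
    obtain ⟨Q, ι₁, ι₂, hc⟩ := hcop B₁.as B₂.as
    obtain ⟨φ, ψ, h1, h2, h3, h4, h5, h6⟩ := Stmt10Aux.pc_compare (himg0 hc) c
    exact ⟨Q, ι₁, ι₂, hc, φ, ψ, h1, h2, h5, h6⟩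
  refine
    { hunit := rfl
      hobj := fun X Y => rfl
      htens := ?_
      hassoc := ?_
      hlam := ?_
      hrho := ?_
      himg := fun hc => himg0 hc
      hinitial := ?_
      hhas := ?_
      hdistQ := ?_
      htransQ := ?_ }
  · intro X X' Y Y' f g
    have e1 : eqToHom (show (Quotient.functor (gpRel P)).obj X ⊗ (Quotient.functor (gpRel P)).obj Y = (Quotient.functor (gpRel P)).obj (X ⊗ Y) from rfl)
        = 𝟙 ((Quotient.functor (gpRel P)).obj X ⊗ (Quotient.functor (gpRel P)).obj Y) := eqToHom_refl _ _
    have e2 : eqToHom (show (Quotient.functor (gpRel P)).obj (X' ⊗ Y') = (Quotient.functor (gpRel P)).obj X' ⊗ (Quotient.functor (gpRel P)).obj Y' from rfl)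
        = 𝟙 ((Quotient.functor (gpRel P)).obj (X' ⊗ Y')) := eqToHom_refl _ _
    erw [e1, e2, Category.id_comp, Category.comp_id]
    rfl
  · intro X Y Z
    have e1 : eqToHom (show ((Quotient.functor (gpRel P)).obj X ⊗ (Quotient.functor (gpRel P)).obj Y) ⊗ (Quotient.functor (gpRel P)).obj Z = (Quotient.functor (gpRel P)).obj ((X ⊗ Y) ⊗ Z) from rfl)
        = 𝟙 _ := eqToHom_refl _ _
    have e2 : eqToHom (show (Quotient.functor (gpRel P)).obj (X ⊗ (Y ⊗ Z)) = (Quotient.functor (gpRel P)).obj X ⊗ ((Quotient.functor (gpRel P)).obj Y ⊗ (Quotient.functor (gpRel P)).obj Z) from rfl)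
        = 𝟙 _ := eqToHom_refl _ _
    erw [e1, e2, Category.id_comp, Category.comp_id]
    rfl
  · intro X
    have e1 : eqToHom (show 𝟙_ (Quotient (gpRel P)) ⊗ (Quotient.functor (gpRel P)).obj X = (Quotient.functor (gpRel P)).obj (𝟙_ C ⊗ X) from rfl)
        = 𝟙 _ := eqToHom_refl _ _
    erw [e1, Category.id_comp]
    rfl
  · intro X
    have e1 : eqToHom (show (Quotient.functor (gpRel P)).obj X ⊗ 𝟙_ (Quotient (gpRel P)) = (Quotient.functor (gpRel P)).obj (X ⊗ 𝟙_ C) from rfl)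
        = 𝟙 _ := eqToHom_refl _ _
    erw [e1, Category.id_comp]
    rfl
  · -- initial objects
    intro Z hZ
    refine ⟨IsInitial.ofUniqueHom (fun Y => (Quotient.functor (gpRel P)).map (hZ.to Y.as)) ?_⟩
    intro Y m
    obtain ⟨m₀, rfl⟩ := hrep m
    exact congrArg (Quotient.functor (gpRel P)).map (hZ.hom_ext m₀ (hZ.to Y.as))
  · -- existence of phased coproducts
    intro A B
    obtain ⟨Q, ι₁, ι₂, hc⟩ := hcop A.as B.as
    exact ⟨(Quotient.functor (gpRel P)).obj Q, (Quotient.functor (gpRel P)).map ι₁, (Quotient.functor (gpRel P)).map ι₂, himg0 hc⟩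
  · -- distributivity of phased coproducts
    intro A B₁ B₂ Pq κ₁ κ₂ c
    obtain ⟨Q, ι₁, ι₂, hc, φ, ψ, hφ1, hφ2, hφψ, hψφ⟩ := hcmp c
    constructor
    · -- left tensoring
      have hcA : IsCoproduct₂ (A.as ⊗ B₁.as) (A.as ⊗ B₂.as) (A.as ⊗ Q)
          (A.as ◁ ι₁) (A.as ◁ ι₂) := (hdist A.as hc).1
      have hAφψ : (A ◁ φ) ≫ (A ◁ ψ) = 𝟙 (A ⊗ (Quotient.functor (gpRel P)).obj Q) := by
        rw [← MonoidalCategory.whiskerLeft_comp, hφψ, MonoidalCategory.whiskerLeft_id]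
      have hAψφ : (A ◁ ψ) ≫ (A ◁ φ) = 𝟙 (A ⊗ Pq) := by
        rw [← MonoidalCategory.whiskerLeft_comp, hψφ, MonoidalCategory.whiskerLeft_id]
      have e₁ : (Quotient.functor (gpRel P)).map (A.as ◁ ι₁) ≫ (A ◁ φ) = A ◁ κ₁ := by
        erw [← hwl, ← MonoidalCategory.whiskerLeft_comp, hφ1]
      have e₂ : (Quotient.functor (gpRel P)).map (A.as ◁ ι₂) ≫ (A ◁ φ) = A ◁ κ₂ := by
        erw [← hwl, ← MonoidalCategory.whiskerLeft_comp, hφ2]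
      have t1 := Stmt10Aux.pc_transport (himg0 hcA) (A ◁ φ) (A ◁ ψ) hAφψ hAψφ
      rw [e₁, e₂] at t1
      refine ⟨t1, ?_⟩
      -- phases have the required form
      intro W hW1 hW2
      have fix1 : (Quotient.functor (gpRel P)).map (A.as ◁ ι₁) ≫ ((A ◁ φ) ≫ W ≫ (A ◁ ψ)) = (Quotient.functor (gpRel P)).map (A.as ◁ ι₁) := by
        erw [← Category.assoc, e₁, ← Category.assoc, hW1, ← e₁, Category.assoc, hAφψ]
        exact Category.comp_id _
      have fix2 : (Quotient.functor (gpRel P)).map (A.as ◁ ι₂) ≫ ((A ◁ φ) ≫ W ≫ (A ◁ ψ)) = (Quotient.functor (gpRel P)).map (A.as ◁ ι₂) := by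
        erw [← Category.assoc, e₂, ← Category.assoc, hW2, ← e₂, Category.assoc, hAφψ]
        exact Category.comp_id _
      obtain ⟨w, u, v, hu, hv, hWw, hw1, hw2⟩ := hphase_img hcA _ fix1 fix2
      rw [← Stmt10Aux.whiskerLeft_lact (hP.central u hu) A.as ι₁] at hw1
      rw [← Stmt10Aux.whiskerLeft_lact (hP.central v hv) A.as ι₂] at hw2
      obtain ⟨U₀, ⟨hU1, hU2⟩, -⟩ := hc (lact u ι₁) (lact v ι₂)
      have hwU : w = A.as ◁ U₀ :=
        ExistsUnique.unique (hcA (A.as ◁ lact u ι₁) (A.as ◁ lact v ι₂))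
          ⟨hw1, hw2⟩
          ⟨by rw [← MonoidalCategory.whiskerLeft_comp, hU1],
            by rw [← MonoidalCategory.whiskerLeft_comp, hU2]⟩
      refine ⟨ψ ≫ (Quotient.functor (gpRel P)).map U₀ ≫ φ, ⟨?_, ?_⟩, ?_⟩
      · have : κ₁ ≫ ψ = (Quotient.functor (gpRel P)).map ι₁ := by rw [← hφ1, Category.assoc, hφψ, Category.comp_id]
        rw [← Category.assoc, this, ← Category.assoc, ← (Quotient.functor (gpRel P)).map_comp, hU1]
        rw [show (Quotient.functor (gpRel P)).map (lact u ι₁) = (Quotient.functor (gpRel P)).map ι₁ from (hmapeq _ _).2 ⟨u, hu, rfl⟩, hφ1]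
      · have : κ₂ ≫ ψ = (Quotient.functor (gpRel P)).map ι₂ := by rw [← hφ2, Category.assoc, hφψ, Category.comp_id]
        rw [← Category.assoc, this, ← Category.assoc, ← (Quotient.functor (gpRel P)).map_comp, hU2]
        rw [show (Quotient.functor (gpRel P)).map (lact v ι₂) = (Quotient.functor (gpRel P)).map ι₂ from (hmapeq _ _).2 ⟨v, hv, rfl⟩, hφ2]
      · rw [MonoidalCategory.whiskerLeft_comp, MonoidalCategory.whiskerLeft_comp,
          hwl, ← hwU, ← hWw]
        show W = (A ◁ ψ) ≫ ((A ◁ φ) ≫ W ≫ (A ◁ ψ)) ≫ (A ◁ φ)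
        simp only [Category.assoc]
        rw [show (A ◁ ψ) ≫ (A ◁ φ) ≫ W ≫ (A ◁ ψ) ≫ (A ◁ φ)
            = ((A ◁ ψ) ≫ (A ◁ φ)) ≫ W ≫ ((A ◁ ψ) ≫ (A ◁ φ)) by
          simp only [Category.assoc]]
        rw [hAψφ, Category.id_comp]
        exact (Category.comp_id _).symm
    · -- right tensoring
      have hcA : IsCoproduct₂ (B₁.as ⊗ A.as) (B₂.as ⊗ A.as) (Q ⊗ A.as)
          (ι₁ ▷ A.as) (ι₂ ▷ A.as) := (hdist A.as hc).2
      have hAφψ : (φ ▷ A) ≫ (ψ ▷ A) = 𝟙 ((Quotient.functor (gpRel P)).obj Q ⊗ A) := by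
        rw [← MonoidalCategory.comp_whiskerRight, hφψ, MonoidalCategory.id_whiskerRight]
      have hAψφ : (ψ ▷ A) ≫ (φ ▷ A) = 𝟙 (Pq ⊗ A) := by
        rw [← MonoidalCategory.comp_whiskerRight, hψφ, MonoidalCategory.id_whiskerRight]
      have e₁ : (Quotient.functor (gpRel P)).map (ι₁ ▷ A.as) ≫ (φ ▷ A) = κ₁ ▷ A := by
        erw [← hwr, ← MonoidalCategory.comp_whiskerRight, hφ1]
      have e₂ : (Quotient.functor (gpRel P)).map (ι₂ ▷ A.as) ≫ (φ ▷ A) = κ₂ ▷ A := by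
        erw [← hwr, ← MonoidalCategory.comp_whiskerRight, hφ2]
      have t1 := Stmt10Aux.pc_transport (himg0 hcA) (φ ▷ A) (ψ ▷ A) hAφψ hAψφ
      rw [e₁, e₂] at t1
      refine ⟨t1, ?_⟩
      intro W hW1 hW2
      have fix1 : (Quotient.functor (gpRel P)).map (ι₁ ▷ A.as) ≫ ((φ ▷ A) ≫ W ≫ (ψ ▷ A)) = (Quotient.functor (gpRel P)).map (ι₁ ▷ A.as) := by
        erw [← Category.assoc, e₁, ← Category.assoc, hW1, ← e₁, Category.assoc, hAφψ]
        exact Category.comp_id _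
      have fix2 : (Quotient.functor (gpRel P)).map (ι₂ ▷ A.as) ≫ ((φ ▷ A) ≫ W ≫ (ψ ▷ A)) = (Quotient.functor (gpRel P)).map (ι₂ ▷ A.as) := by
        erw [← Category.assoc, e₂, ← Category.assoc, hW2, ← e₂, Category.assoc, hAφψ]
        exact Category.comp_id _
      obtain ⟨w, u, v, hu, hv, hWw, hw1, hw2⟩ := hphase_img hcA _ fix1 fix2
      rw [← Stmt10Aux.whiskerRight_lact u ι₁ A.as] at hw1
      rw [← Stmt10Aux.whiskerRight_lact v ι₂ A.as] at hw2
      obtain ⟨U₀, ⟨hU1, hU2⟩, -⟩ := hc (lact u ι₁) (lact v ι₂)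
      have hwU : w = U₀ ▷ A.as :=
        ExistsUnique.unique (hcA ((lact u ι₁) ▷ A.as) ((lact v ι₂) ▷ A.as))
          ⟨hw1, hw2⟩
          ⟨by rw [← MonoidalCategory.comp_whiskerRight, hU1],
            by rw [← MonoidalCategory.comp_whiskerRight, hU2]⟩
      refine ⟨ψ ≫ (Quotient.functor (gpRel P)).map U₀ ≫ φ, ⟨?_, ?_⟩, ?_⟩
      · have : κ₁ ≫ ψ = (Quotient.functor (gpRel P)).map ι₁ := by rw [← hφ1, Category.assoc, hφψ, Category.comp_id]
        rw [← Category.assoc, this, ← Category.assoc, ← (Quotient.functor (gpRel P)).map_comp, hU1]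
        rw [show (Quotient.functor (gpRel P)).map (lact u ι₁) = (Quotient.functor (gpRel P)).map ι₁ from (hmapeq _ _).2 ⟨u, hu, rfl⟩, hφ1]
      · have : κ₂ ≫ ψ = (Quotient.functor (gpRel P)).map ι₂ := by rw [← hφ2, Category.assoc, hφψ, Category.comp_id]
        rw [← Category.assoc, this, ← Category.assoc, ← (Quotient.functor (gpRel P)).map_comp, hU2]
        rw [show (Quotient.functor (gpRel P)).map (lact v ι₂) = (Quotient.functor (gpRel P)).map ι₂ from (hmapeq _ _).2 ⟨v, hv, rfl⟩, hφ2]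
      · rw [MonoidalCategory.comp_whiskerRight, MonoidalCategory.comp_whiskerRight,
          hwr, ← hwU, ← hWw]
        show W = (ψ ▷ A) ≫ ((φ ▷ A) ≫ W ≫ (ψ ▷ A)) ≫ (φ ▷ A)
        simp only [Category.assoc]
        rw [show (ψ ▷ A) ≫ (φ ▷ A) ≫ W ≫ (ψ ▷ A) ≫ (φ ▷ A)
            = ((ψ ▷ A) ≫ (φ ▷ A)) ≫ W ≫ ((ψ ▷ A) ≫ (φ ▷ A)) by
          simp only [Category.assoc]]
        rw [hAψφ, Category.id_comp]
        exact (Category.comp_id _).symm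
  · -- transitivity of phases
    intro A B Pq κA κB A' B' Pq' κA' κB' c c' f hgA hgB U hU1 hU2
    obtain ⟨Q, ι₁, ι₂, hc, φ, ψ, hφ1, hφ2, hφψ, hψφ⟩ := hcmp c
    obtain ⟨Q', ι₁', ι₂', hc', φ', ψ', hφ1', hφ2', hφψ', hψφ'⟩ := hcmp c'
    have hκψ1 : κA ≫ ψ = (Quotient.functor (gpRel P)).map ι₁ := by rw [← hφ1, Category.assoc, hφψ, Category.comp_id]
    have hκψ2 : κB ≫ ψ = (Quotient.functor (gpRel P)).map ι₂ := by rw [← hφ2, Category.assoc, hφψ, Category.comp_id]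
    have hκψ1' : κA' ≫ ψ' = (Quotient.functor (gpRel P)).map ι₁' := by
      rw [← hφ1', Category.assoc, hφψ', Category.comp_id]
    have hκψ2' : κB' ≫ ψ' = (Quotient.functor (gpRel P)).map ι₂' := by
      rw [← hφ2', Category.assoc, hφψ', Category.comp_id]
    -- the phase on the image coproduct
    have fix1 : (Quotient.functor (gpRel P)).map ι₁ ≫ (φ ≫ U ≫ ψ) = (Quotient.functor (gpRel P)).map ι₁ := by
      rw [← Category.assoc, hφ1, ← Category.assoc, hU1, hκψ1]
    have fix2 : (Quotient.functor (gpRel P)).map ι₂ ≫ (φ ≫ U ≫ ψ) = (Quotient.functor (gpRel P)).map ι₂ := by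
      rw [← Category.assoc, hφ2, ← Category.assoc, hU2, hκψ2]
    obtain ⟨u₀, u, v, hu, hv, hUu, hu1, hu2⟩ := hphase_img hc _ fix1 fix2
    -- a representative of the transported diagonal morphism
    obtain ⟨f₀, hf₀⟩ := hrep (φ ≫ f ≫ ψ')
    obtain ⟨g, hg⟩ := hgA
    obtain ⟨h, hh⟩ := hgB
    obtain ⟨g₀, rfl⟩ := hrep g
    obtain ⟨h₀, rfl⟩ := hrep h
    have hdg1 : (Quotient.functor (gpRel P)).map (ι₁ ≫ f₀) = (Quotient.functor (gpRel P)).map (g₀ ≫ ι₁') := by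
      rw [(Quotient.functor (gpRel P)).map_comp, (Quotient.functor (gpRel P)).map_comp, ← hf₀, ← Category.assoc, hφ1, ← Category.assoc, hg,
        Category.assoc, hκψ1']
    have hdg2 : (Quotient.functor (gpRel P)).map (ι₂ ≫ f₀) = (Quotient.functor (gpRel P)).map (h₀ ≫ ι₂') := by
      rw [(Quotient.functor (gpRel P)).map_comp, (Quotient.functor (gpRel P)).map_comp, ← hf₀, ← Category.assoc, hφ2, ← Category.assoc, hh,
        Category.assoc, hκψ2']
    rw [hmapeq] at hdg1 hdg2
    obtain ⟨s, hs, hs'⟩ := hdg1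
    obtain ⟨t, ht, ht'⟩ := hdg2
    rw [← Stmt10Aux.lact_comp] at hs' ht'
    -- the matching phase downstairs
    obtain ⟨v₀, ⟨hv1, hv2⟩, -⟩ := hc' (lact u ι₁') (lact v ι₂')
    have key : u₀ ≫ f₀ = f₀ ≫ v₀ := by
      apply ExistsUnique.unique (hc (lact u (ι₁ ≫ f₀)) (lact v (ι₂ ≫ f₀)))
      · constructor
        · rw [← Category.assoc, hu1, Stmt10Aux.lact_comp]
        · rw [← Category.assoc, hu2, Stmt10Aux.lact_comp]
      · constructor
        · rw [← Category.assoc, hs', Category.assoc, hv1, Stmt10Aux.comp_lact, ← hs']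
        · rw [← Category.assoc, ht', Category.assoc, hv2, Stmt10Aux.comp_lact, ← ht']
    refine ⟨ψ' ≫ (Quotient.functor (gpRel P)).map v₀ ≫ φ', ⟨?_, ?_⟩, ?_⟩
    · rw [← Category.assoc, hκψ1', ← Category.assoc, ← (Quotient.functor (gpRel P)).map_comp, hv1,
        show (Quotient.functor (gpRel P)).map (lact u ι₁') = (Quotient.functor (gpRel P)).map ι₁' from (hmapeq _ _).2 ⟨u, hu, rfl⟩, hφ1']
    · rw [← Category.assoc, hκψ2', ← Category.assoc, ← (Quotient.functor (gpRel P)).map_comp, hv2,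
        show (Quotient.functor (gpRel P)).map (lact v ι₂') = (Quotient.functor (gpRel P)).map ι₂' from (hmapeq _ _).2 ⟨v, hv, rfl⟩, hφ2']
    · -- U ≫ f = f ≫ V
      have hU' : U = ψ ≫ (Quotient.functor (gpRel P)).map u₀ ≫ φ := by
        rw [← hUu]
        rw [show ψ ≫ (φ ≫ U ≫ ψ) ≫ φ = (ψ ≫ φ) ≫ U ≫ (ψ ≫ φ) by
          simp only [Category.assoc]]
        rw [hψφ, Category.id_comp, Category.comp_id]
      have hf' : φ ≫ f = (Quotient.functor (gpRel P)).map f₀ ≫ φ' := by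
        rw [← hf₀]
        rw [show (φ ≫ f ≫ ψ') ≫ φ' = φ ≫ f ≫ (ψ' ≫ φ') by simp only [Category.assoc]]
        rw [hψφ', Category.comp_id]
      have hfψ' : f ≫ ψ' = ψ ≫ (Quotient.functor (gpRel P)).map f₀ := by
        rw [← hf₀]
        rw [show ψ ≫ φ ≫ f ≫ ψ' = (ψ ≫ φ) ≫ f ≫ ψ' by simp only [Category.assoc]]
        rw [hψφ, Category.id_comp]
      rw [hU', Category.assoc, Category.assoc, hf']
      rw [show f ≫ ψ' ≫ (Quotient.functor (gpRel P)).map v₀ ≫ φ' = (f ≫ ψ') ≫ (Quotient.functor (gpRel P)).map v₀ ≫ φ' by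
        simp only [Category.assoc]]
      rw [hfψ', ← Category.assoc ((Quotient.functor (gpRel P)).map u₀), ← (Quotient.functor (gpRel P)).map_comp, key, (Quotient.functor (gpRel P)).map_comp]
      simp only [Category.assoc]
end

section
/- Let C be a monoidal category with distributive finite phased coproducts. Then the monoidal unit I is a phase generator: every ∇ : I +̇ I → I with ∇ ∘ κ₁ = id_I = ∇ ∘ κ₂ is phase monic, and every diagonal monomorphism m : I +̇ I → A +̇ B is phase epic. -/
open CategoryTheory CategoryTheory.Limits

universe v u

variable {C : Type u} [Category.{v} C]

open MonoidalCategory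

section PhaseGeneratorAux

/-- Every phase of a binary phased coproduct is invertible, with a phase inverse. -/
private lemma pc_phase_inv {A B Q : C} {κA : A ⟶ Q} {κB : B ⟶ Q}
    (hQ : IsPhasedCoproduct₂ A B Q κA κB) {U : Q ⟶ Q}
    (h1 : κA ≫ U = κA) (h2 : κB ≫ U = κB) :
    ∃ V : Q ⟶ Q, (κA ≫ V = κA ∧ κB ≫ V = κB) ∧ U ≫ V = 𝟙 Q ∧ V ≫ U = 𝟙 Q := by
  obtain ⟨V, ⟨hV1, hV2⟩, hVU⟩ := hQ.phase U (𝟙 Q)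
    (by rw [h1, Category.comp_id]) (by rw [h2, Category.comp_id])
  obtain ⟨W, ⟨hW1, hW2⟩, hWV⟩ := hQ.phase V (𝟙 Q)
    (by rw [hV1, Category.comp_id]) (by rw [hV2, Category.comp_id])
  have hWU : W = U := by
    calc W = W ≫ 𝟙 Q := (Category.comp_id W).symm
    _ = W ≫ (V ≫ U) := by rw [← hVU]
    _ = (W ≫ V) ≫ U := (Category.assoc W V U).symm
    _ = 𝟙 Q ≫ U := by rw [← hWV]
    _ = U := Category.id_comp U
  refine ⟨V, ⟨hV1, hV2⟩, ?_, hVU.symm⟩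
  rw [← hWU]; exact hWV.symm

section MonoidalAux

variable [MonoidalCategory C]

private lemma comp_left {X Q' P' T' : C} (x : X ⟶ Q') (u : 𝟙_ C ⟶ P')
    {L : Q' ⊗ P' ⟶ T'} {t : Q' ⟶ T'}
    (hL : (Q' ◁ u) ≫ L = (ρ_ Q').hom ≫ t) :
    (X ◁ u) ≫ (x ▷ P') ≫ L = (ρ_ X).hom ≫ x ≫ t := by
  slice_lhs 1 2 => rw [MonoidalCategory.whisker_exchange]
  slice_lhs 2 3 => rw [hL]
  slice_lhs 1 2 => rw [MonoidalCategory.rightUnitor_naturality]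
  simp only [Category.assoc]

private lemma comp_left' {X P' T' : C} (u : 𝟙_ C ⟶ P') (s : P' ⟶ 𝟙_ C) (t : X ⟶ T')
    (hus : u ≫ s = 𝟙 (𝟙_ C)) :
    (X ◁ u) ≫ (X ◁ s) ≫ (ρ_ X).hom ≫ t = (ρ_ X).hom ≫ t := by
  slice_lhs 1 2 => rw [← MonoidalCategory.whiskerLeft_comp, hus, MonoidalCategory.whiskerLeft_id]
  simp only [Category.id_comp, Category.assoc]

private lemma const_comp {X P' T' : C} (x : 𝟙_ C ⟶ X) (w : P' ⟶ P') (s : P' ⟶ 𝟙_ C)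
    (t : X ⟶ T') :
    (x ▷ P') ≫ (X ◁ w) ≫ (X ◁ s) ≫ (ρ_ X).hom ≫ t = (λ_ P').hom ≫ w ≫ s ≫ x ≫ t := by
  slice_lhs 1 2 => rw [← MonoidalCategory.whisker_exchange]
  slice_lhs 2 3 => rw [← MonoidalCategory.whisker_exchange]
  slice_lhs 3 4 => rw [MonoidalCategory.rightUnitor_naturality]
  rw [← MonoidalCategory.unitors_equal]
  slice_lhs 2 3 => rw [MonoidalCategory.leftUnitor_naturality]
  slice_lhs 1 2 => rw [MonoidalCategory.leftUnitor_naturality]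
  simp only [Category.assoc]

/-- Core of phase-monicity: a phase absorbed by a (generalized) codiagonal is the identity. -/
private lemma pc_fold_monic {P : C} {κ₁ κ₂ : 𝟙_ C ⟶ P}
    (hP : IsPhasedCoproduct₂ (𝟙_ C) (𝟙_ C) P κ₁ κ₂)
    {e : P ⟶ 𝟙_ C} (he₁ : κ₁ ≫ e = 𝟙 (𝟙_ C)) (he₂ : κ₂ ≫ e = 𝟙 (𝟙_ C))
    {W : P ⟶ P} (hW₁ : κ₁ ≫ W = κ₁) (hW₂ : κ₂ ≫ W = κ₂)
    (hWe : W ≫ e = e) : W = 𝟙 P := by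
  obtain ⟨Δ, hΔ₁, hΔ₂⟩ := hP.lift
    ((λ_ (𝟙_ C)).inv ≫ κ₁ ▷ 𝟙_ C ≫ P ◁ κ₁)
    ((λ_ (𝟙_ C)).inv ≫ κ₂ ▷ 𝟙_ C ≫ P ◁ κ₂)
  have hcompΘ : ∀ u : 𝟙_ C ⟶ P, u ≫ e = 𝟙 (𝟙_ C) →
      ((λ_ (𝟙_ C)).inv ≫ u ▷ 𝟙_ C ≫ P ◁ u) ≫ (P ◁ e) ≫ (ρ_ P).hom = u := by
    intro u hu
    simp only [Category.assoc]
    slice_lhs 3 4 => rw [← MonoidalCategory.whiskerLeft_comp, hu, MonoidalCategory.whiskerLeft_id]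
    simp only [Category.id_comp, Category.assoc]
    rw [MonoidalCategory.rightUnitor_naturality, ← MonoidalCategory.unitors_equal,
      Iso.inv_hom_id_assoc]
  have hcompΘ' : ∀ u : 𝟙_ C ⟶ P, u ≫ e = 𝟙 (𝟙_ C) →
      ((λ_ (𝟙_ C)).inv ≫ u ▷ 𝟙_ C ≫ P ◁ u) ≫ (e ▷ P) ≫ (λ_ P).hom = u := by
    intro u hu
    simp only [Category.assoc]
    slice_lhs 3 4 => rw [MonoidalCategory.whisker_exchange]
    slice_lhs 2 3 => rw [← MonoidalCategory.comp_whiskerRight, hu, MonoidalCategory.id_whiskerRight]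
    simp only [Category.id_comp, Category.assoc]
    rw [MonoidalCategory.leftUnitor_naturality, Iso.inv_hom_id_assoc]
  have hΘ₁ : κ₁ ≫ (Δ ≫ (P ◁ e) ≫ (ρ_ P).hom) = κ₁ := by
    rw [← Category.assoc, hΔ₁]; exact hcompΘ κ₁ he₁
  have hΘ₂ : κ₂ ≫ (Δ ≫ (P ◁ e) ≫ (ρ_ P).hom) = κ₂ := by
    rw [← Category.assoc, hΔ₂]; exact hcompΘ κ₂ he₂
  have hΘ'₁ : κ₁ ≫ (Δ ≫ (e ▷ P) ≫ (λ_ P).hom) = κ₁ := by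
    rw [← Category.assoc, hΔ₁]; exact hcompΘ' κ₁ he₁
  have hΘ'₂ : κ₂ ≫ (Δ ≫ (e ▷ P) ≫ (λ_ P).hom) = κ₂ := by
    rw [← Category.assoc, hΔ₂]; exact hcompΘ' κ₂ he₂
  have habs₁ : κ₁ ≫ (Δ ≫ P ◁ W) = κ₁ ≫ Δ := by
    rw [← Category.assoc, hΔ₁]
    simp only [Category.assoc]
    rw [← MonoidalCategory.whiskerLeft_comp, hW₁]
  have habs₂ : κ₂ ≫ (Δ ≫ P ◁ W) = κ₂ ≫ Δ := by
    rw [← Category.assoc, hΔ₂]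
    simp only [Category.assoc]
    rw [← MonoidalCategory.whiskerLeft_comp, hW₂]
  obtain ⟨Ξ, ⟨hΞ₁, hΞ₂⟩, hΞeq⟩ := hP.phase Δ (Δ ≫ P ◁ W) habs₁.symm habs₂.symm
  obtain ⟨Θi, -, hΘΘi, -⟩ := pc_phase_inv hP hΘ₁ hΘ₂
  have hΞid : Ξ = 𝟙 P := by
    have h1 : Ξ ≫ (Δ ≫ (P ◁ e) ≫ (ρ_ P).hom) = Δ ≫ (P ◁ e) ≫ (ρ_ P).hom := by
      calc Ξ ≫ (Δ ≫ (P ◁ e) ≫ (ρ_ P).hom)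
          = (Ξ ≫ Δ) ≫ (P ◁ e) ≫ (ρ_ P).hom := by simp only [Category.assoc]
        _ = (Δ ≫ P ◁ W) ≫ (P ◁ e) ≫ (ρ_ P).hom := by rw [hΞeq]
        _ = Δ ≫ (P ◁ e) ≫ (ρ_ P).hom := by
            simp only [Category.assoc]
            rw [← MonoidalCategory.whiskerLeft_comp_assoc, hWe]
    calc Ξ = Ξ ≫ 𝟙 P := (Category.comp_id Ξ).symm
    _ = Ξ ≫ ((Δ ≫ (P ◁ e) ≫ (ρ_ P).hom) ≫ Θi) := by rw [hΘΘi]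
    _ = (Ξ ≫ (Δ ≫ (P ◁ e) ≫ (ρ_ P).hom)) ≫ Θi := by rw [← Category.assoc]
    _ = (Δ ≫ (P ◁ e) ≫ (ρ_ P).hom) ≫ Θi := by rw [h1]
    _ = 𝟙 P := hΘΘi
  obtain ⟨Θ'i, -, -, hΘ'iΘ'⟩ := pc_phase_inv hP hΘ'₁ hΘ'₂
  have h2 : (Δ ≫ (e ▷ P) ≫ (λ_ P).hom) ≫ W = Δ ≫ (e ▷ P) ≫ (λ_ P).hom := by
    calc (Δ ≫ (e ▷ P) ≫ (λ_ P).hom) ≫ W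
        = Δ ≫ (e ▷ P) ≫ (λ_ P).hom ≫ W := by simp only [Category.assoc]
      _ = Δ ≫ (e ▷ P) ≫ (𝟙_ C ◁ W) ≫ (λ_ P).hom := by
          rw [← MonoidalCategory.leftUnitor_naturality]
      _ = Δ ≫ (P ◁ W) ≫ (e ▷ P) ≫ (λ_ P).hom := by
          slice_lhs 2 3 => rw [← MonoidalCategory.whisker_exchange]
          simp only [Category.assoc]
      _ = (Δ ≫ P ◁ W) ≫ (e ▷ P) ≫ (λ_ P).hom := by rw [← Category.assoc]
      _ = (Ξ ≫ Δ) ≫ (e ▷ P) ≫ (λ_ P).hom := by rw [hΞeq]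
      _ = Δ ≫ (e ▷ P) ≫ (λ_ P).hom := by rw [hΞid, Category.id_comp]
  calc W = 𝟙 P ≫ W := (Category.id_comp W).symm
  _ = (Θ'i ≫ (Δ ≫ (e ▷ P) ≫ (λ_ P).hom)) ≫ W := by rw [hΘ'iΘ']
  _ = Θ'i ≫ ((Δ ≫ (e ▷ P) ≫ (λ_ P).hom) ≫ W) := by rw [Category.assoc]
  _ = Θ'i ≫ (Δ ≫ (e ▷ P) ≫ (λ_ P).hom) := by rw [h2]
  _ = 𝟙 P := hΘ'iΘ'

private lemma pc_phase_monic {P : C} {κ₁ κ₂ : 𝟙_ C ⟶ P}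
    (hP : IsPhasedCoproduct₂ (𝟙_ C) (𝟙_ C) P κ₁ κ₂)
    (d : P ⟶ 𝟙_ C) (hd₁ : κ₁ ≫ d = 𝟙 (𝟙_ C)) (hd₂ : κ₂ ≫ d = 𝟙 (𝟙_ C))
    {U V : P ⟶ P} (hU₁ : κ₁ ≫ U = κ₁) (hU₂ : κ₂ ≫ U = κ₂)
    (hV₁ : κ₁ ≫ V = κ₁) (hV₂ : κ₂ ≫ V = κ₂)
    (hUV : U ≫ d = V ≫ d) : U = V := by
  obtain ⟨V', ⟨hV'₁, hV'₂⟩, hVV', hV'V⟩ := pc_phase_inv hP hV₁ hV₂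
  have hW₁ : κ₁ ≫ (U ≫ V') = κ₁ := by rw [← Category.assoc, hU₁, hV'₁]
  have hW₂ : κ₂ ≫ (U ≫ V') = κ₂ := by rw [← Category.assoc, hU₂, hV'₂]
  have he₁ : κ₁ ≫ (V ≫ d) = 𝟙 (𝟙_ C) := by rw [← Category.assoc, hV₁, hd₁]
  have he₂ : κ₂ ≫ (V ≫ d) = 𝟙 (𝟙_ C) := by rw [← Category.assoc, hV₂, hd₂]
  have hWe : (U ≫ V') ≫ (V ≫ d) = V ≫ d := by
    calc (U ≫ V') ≫ (V ≫ d) = U ≫ (V' ≫ V) ≫ d := by simp only [Category.assoc]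
    _ = U ≫ d := by rw [hV'V, Category.id_comp]
    _ = V ≫ d := hUV
  have hid := pc_fold_monic hP he₁ he₂ hW₁ hW₂ hWe
  calc U = U ≫ (V' ≫ V) := by rw [hV'V, Category.comp_id]
  _ = (U ≫ V') ≫ V := (Category.assoc _ _ _).symm
  _ = 𝟙 P ≫ V := by rw [hid]
  _ = V := Category.id_comp V

/-- Core of phase-epicness: a phase of `A +̇ B` absorbed by a diagonal mono out of
`𝟙 +̇ 𝟙` is the identity. -/
private lemma pc_phase_epic_core {P : C} {κ₁ κ₂ : 𝟙_ C ⟶ P}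
    (hP : IsPhasedCoproduct₂ (𝟙_ C) (𝟙_ C) P κ₁ κ₂)
    {A B Q : C} {κA : A ⟶ Q} {κB : B ⟶ Q} (hQC : IsPhasedCoproduct₂ A B Q κA κB)
    (hdist : DistribPhasedCoproducts C)
    {m : P ⟶ Q} (hm : Mono m)
    {g : 𝟙_ C ⟶ A} (hg : κ₁ ≫ m = g ≫ κA)
    {h : 𝟙_ C ⟶ B} (hh : κ₂ ≫ m = h ≫ κB)
    {d : P ⟶ 𝟙_ C} (hd₁ : κ₁ ≫ d = 𝟙 (𝟙_ C)) (hd₂ : κ₂ ≫ d = 𝟙 (𝟙_ C))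
    {Ω : Q ⟶ Q} (hΩA : κA ≫ Ω = κA) (hΩB : κB ≫ Ω = κB)
    (hmΩ : m ≫ Ω = m) : Ω = 𝟙 Q := by
  haveI : Mono m := hm
  obtain ⟨⟨hQP, hQPs⟩, -⟩ := hdist Q hP
  obtain ⟨⟨hAP, hAPs⟩, -⟩ := hdist A hP
  obtain ⟨⟨hBP, hBPs⟩, -⟩ := hdist B hP
  obtain ⟨⟨hPP, hPPs⟩, -⟩ := hdist P hP
  obtain ⟨-, hQPr, hQPrs⟩ := hdist P hQC
  obtain ⟨L, hL₁, hL₂⟩ := hQP.lift ((ρ_ Q).hom ≫ Ω) ((ρ_ Q).hom)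
  have hL₂' : (Q ◁ κ₂) ≫ L = (ρ_ Q).hom ≫ 𝟙 Q := by rw [Category.comp_id]; exact hL₂
  -- components of L over A and B, and over P via m
  have hfA₁ : (A ◁ κ₁) ≫ (κA ▷ P) ≫ L = (ρ_ A).hom ≫ κA := by
    rw [comp_left κA κ₁ hL₁, hΩA]
  have hfA₂ : (A ◁ κ₂) ≫ (κA ▷ P) ≫ L = (ρ_ A).hom ≫ κA := by
    rw [comp_left κA κ₂ hL₂', Category.comp_id]
  obtain ⟨𝔄, ⟨h𝔄₁, h𝔄₂⟩, h𝔄eq⟩ := hAP.phase ((A ◁ d) ≫ (ρ_ A).hom ≫ κA) ((κA ▷ P) ≫ L)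
    (by rw [comp_left' κ₁ d κA hd₁, hfA₁]) (by rw [comp_left' κ₂ d κA hd₂, hfA₂])
  obtain ⟨XA, ⟨hXA₁, hXA₂⟩, hXAeq⟩ := hAPs 𝔄 h𝔄₁ h𝔄₂
  have hfB₁ : (B ◁ κ₁) ≫ (κB ▷ P) ≫ L = (ρ_ B).hom ≫ κB := by
    rw [comp_left κB κ₁ hL₁, hΩB]
  have hfB₂ : (B ◁ κ₂) ≫ (κB ▷ P) ≫ L = (ρ_ B).hom ≫ κB := by
    rw [comp_left κB κ₂ hL₂', Category.comp_id]
  obtain ⟨𝔅, ⟨h𝔅₁, h𝔅₂⟩, h𝔅eq⟩ := hBP.phase ((B ◁ d) ≫ (ρ_ B).hom ≫ κB) ((κB ▷ P) ≫ L)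
    (by rw [comp_left' κ₁ d κB hd₁, hfB₁]) (by rw [comp_left' κ₂ d κB hd₂, hfB₂])
  obtain ⟨XB, ⟨hXB₁, hXB₂⟩, hXBeq⟩ := hBPs 𝔅 h𝔅₁ h𝔅₂
  have hFm₁ : (P ◁ κ₁) ≫ (m ▷ P) ≫ L = (ρ_ P).hom ≫ m := by
    rw [comp_left m κ₁ hL₁, hmΩ]
  have hFm₂ : (P ◁ κ₂) ≫ (m ▷ P) ≫ L = (ρ_ P).hom ≫ m := by
    rw [comp_left m κ₂ hL₂', Category.comp_id]
  obtain ⟨𝔚, ⟨h𝔚₁, h𝔚₂⟩, h𝔚eq⟩ := hPP.phase ((P ◁ d) ≫ (ρ_ P).hom ≫ m) ((m ▷ P) ≫ L)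
    (by rw [comp_left' κ₁ d m hd₁, hFm₁]) (by rw [comp_left' κ₂ d m hd₂, hFm₂])
  obtain ⟨Z, ⟨hZ₁, hZ₂⟩, hZeq⟩ := hPPs 𝔚 h𝔚₁ h𝔚₂
  -- synchronisation of the extracted phases, using monicity of m
  have main : ∀ {X : C} (κX : X ⟶ Q) (x : 𝟙_ C ⟶ X) (u : 𝟙_ C ⟶ P),
      u ≫ m = x ≫ κX → ∀ XX : P ⟶ P,
      (κX ▷ P) ≫ L = (X ◁ XX) ≫ ((X ◁ d) ≫ (ρ_ X).hom ≫ κX) →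
      u ≫ d = 𝟙 (𝟙_ C) → XX ≫ d = Z ≫ d := by
    intro X κX x u hu XX hXXeq hud
    have wayA : (u ▷ P) ≫ (m ▷ P) ≫ L = (λ_ P).hom ≫ XX ≫ d ≫ u ≫ m := by
      rw [← Category.assoc, ← MonoidalCategory.comp_whiskerRight, hu,
        MonoidalCategory.comp_whiskerRight, Category.assoc, hXXeq]
      try simp only [Category.assoc]
      rw [const_comp x XX d κX, ← hu]
    have wayB : (u ▷ P) ≫ (m ▷ P) ≫ L = (λ_ P).hom ≫ Z ≫ d ≫ u ≫ m := by
      rw [h𝔚eq, hZeq]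
      try simp only [Category.assoc]
      rw [const_comp u Z d m]
    have hcan : XX ≫ d ≫ u ≫ m = Z ≫ d ≫ u ≫ m :=
      (cancel_epi (λ_ P).hom).mp (wayA.symm.trans wayB)
    have h3 : (XX ≫ d ≫ u) ≫ m = (Z ≫ d ≫ u) ≫ m := by
      simpa only [Category.assoc] using hcan
    have h4 := (cancel_mono m).mp h3
    have h5 := congrArg (fun t => t ≫ d) h4
    simpa only [Category.assoc, hud, Category.comp_id] using h5
  have hXAd : XA ≫ d = Z ≫ d :=
    main κA g κ₁ hg XA (by rw [h𝔄eq, hXAeq]) hd₁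
  have hXBd : XB ≫ d = Z ≫ d :=
    main κB h κ₂ hh XB (by rw [h𝔅eq, hXBeq]) hd₂
  -- compare L with (Q ◁ Z) ≫ (Q ◁ d) ≫ ρ along the right-tensored structure
  have hZKA : (κA ▷ P) ≫ ((Q ◁ Z) ≫ ((Q ◁ d) ≫ (ρ_ Q).hom)) = (κA ▷ P) ≫ L := by
    rw [h𝔄eq, hXAeq]
    try simp only [Category.assoc]
    slice_lhs 2 3 => rw [← MonoidalCategory.whiskerLeft_comp]
    slice_lhs 1 2 => rw [← MonoidalCategory.whisker_exchange]
    slice_lhs 2 3 => rw [MonoidalCategory.rightUnitor_naturality]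
    slice_rhs 1 2 => rw [← MonoidalCategory.whiskerLeft_comp, hXAd]
    simp only [Category.assoc]
  have hZKB : (κB ▷ P) ≫ ((Q ◁ Z) ≫ ((Q ◁ d) ≫ (ρ_ Q).hom)) = (κB ▷ P) ≫ L := by
    rw [h𝔅eq, hXBeq]
    try simp only [Category.assoc]
    slice_lhs 2 3 => rw [← MonoidalCategory.whiskerLeft_comp]
    slice_lhs 1 2 => rw [← MonoidalCategory.whisker_exchange]
    slice_lhs 2 3 => rw [MonoidalCategory.rightUnitor_naturality]
    slice_rhs 1 2 => rw [← MonoidalCategory.whiskerLeft_comp, hXBd]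
    simp only [Category.assoc]
  obtain ⟨𝔜, ⟨h𝔜A, h𝔜B⟩, h𝔜eq⟩ :=
    hQPr.phase ((Q ◁ Z) ≫ ((Q ◁ d) ≫ (ρ_ Q).hom)) L hZKA hZKB
  obtain ⟨Y, ⟨hYA, hYB⟩, hYeq⟩ := hQPrs 𝔜 h𝔜A h𝔜B
  -- evaluate using the explicit sections ρ⁻¹ ≫ (Q ◁ κᵢ)
  have evalR : ∀ u : 𝟙_ C ⟶ P, u ≫ Z = u → u ≫ d = 𝟙 (𝟙_ C) →
      (ρ_ Q).inv ≫ (Q ◁ u) ≫ (Y ▷ P) ≫ (Q ◁ Z) ≫ (Q ◁ d) ≫ (ρ_ Q).hom = Y := by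
    intro u huZ hud
    slice_lhs 2 3 => rw [MonoidalCategory.whisker_exchange]
    slice_lhs 3 4 => rw [← MonoidalCategory.whiskerLeft_comp, huZ]
    slice_lhs 3 4 => rw [← MonoidalCategory.whiskerLeft_comp, hud, MonoidalCategory.whiskerLeft_id]
    simp only [Category.id_comp, Category.comp_id, Category.assoc]
    slice_lhs 2 3 => rw [MonoidalCategory.rightUnitor_naturality]
    rw [Iso.inv_hom_id_assoc]
  have evalL₁ : (ρ_ Q).inv ≫ (Q ◁ κ₁) ≫ L = Ω := by
    rw [hL₁, Iso.inv_hom_id_assoc]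
  have evalL₂ : (ρ_ Q).inv ≫ (Q ◁ κ₂) ≫ L = 𝟙 Q := by
    rw [hL₂, Iso.inv_hom_id]
  have hY : Y = 𝟙 Q := by
    have e1 : (ρ_ Q).inv ≫ (Q ◁ κ₂) ≫ L = Y := by
      rw [h𝔜eq, hYeq]
      try simp only [Category.assoc]
      exact evalR κ₂ hZ₂ hd₂
    rw [← e1, evalL₂]
  have e2 : (ρ_ Q).inv ≫ (Q ◁ κ₁) ≫ L = Y := by
    rw [h𝔜eq, hYeq]
    try simp only [Category.assoc]
    exact evalR κ₁ hZ₁ hd₁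
  rw [← evalL₁, e2, hY]

end MonoidalAux

end PhaseGeneratorAux

/-- in a monoidal category with distributive finite phased coproducts,
the monoidal unit `𝟙_ C` is a phase generator. -/
theorem stmt_12 [MonoidalCategory C]
    (hcop : HasPhasedCoproducts₂ C) (hinit : ∃ Z : C, IsPhasedInitial Z)
    (hdist : DistribPhasedCoproducts C) :
    IsPhaseGenerator (𝟙_ C) := by
  refine ⟨?_, ?_⟩
  · -- phase monicity of codiagonals
    intro P κ₁ κ₂ hP d hd₁ hd₂ U V hU hV hUVd
    exact pc_phase_monic hP d hd₁ hd₂ hU.1 hU.2 hV.1 hV.2 hUVd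
  · -- phase epicness of diagonal monos
    intro P κ₁ κ₂ hP A B Q κA κB hQC m hm hgE hhE U V hU hV hUV
    obtain ⟨g, hg⟩ := hgE
    obtain ⟨h, hh⟩ := hhE
    obtain ⟨d, hd₁, hd₂⟩ := hP.lift (𝟙 (𝟙_ C)) (𝟙 (𝟙_ C))
    obtain ⟨V', ⟨hV'A, hV'B⟩, hVV', hV'V⟩ := pc_phase_inv hQC hV.1 hV.2
    have hΩA : κA ≫ (U ≫ V') = κA := by rw [← Category.assoc, hU.1, hV'A]
    have hΩB : κB ≫ (U ≫ V') = κB := by rw [← Category.assoc, hU.2, hV'B]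
    have hmΩ : m ≫ (U ≫ V') = m := by
      rw [← Category.assoc, hUV, Category.assoc, hVV', Category.comp_id]
    have hcore : U ≫ V' = 𝟙 Q :=
      pc_phase_epic_core hP hQC hdist hm hg hh hd₁ hd₂ hΩA hΩB hmΩ
    calc U = U ≫ (V' ≫ V) := by rw [hV'V, Category.comp_id]
    _ = (U ≫ V') ≫ V := (Category.assoc _ _ _).symm
    _ = 𝟙 Q ≫ V := by rw [hcore]
    _ = V := Category.id_comp V
end

section
/- Let C be a monoidal category with distributive finite coproducts all of whose coprojections are monic. Then a scalar s : I → I is central if and only if for every object A there exists a scalar t : I → I with s·id_A = id_A·t. -/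
open CategoryTheory CategoryTheory.Limits

universe v u

variable {C : Type u} [Category.{v} C]

open MonoidalCategory

section Aux
variable {C : Type u} [Category.{v} C] [MonoidalCategory C]

lemma aux_lact_id_comp (s : 𝟙_ C ⟶ 𝟙_ C) {A B : C} (f : A ⟶ B) :
    lact s f = lact s (𝟙 A) ≫ f := by
  simp [lact, MonoidalCategory.tensorHom_def]

lemma aux_lact_comp_id (s : 𝟙_ C ⟶ 𝟙_ C) {A B : C} (f : A ⟶ B) :
    lact s f = f ≫ lact s (𝟙 B) := by
  simp [lact, tensorHom_def']

lemma aux_ract_id_comp (s : 𝟙_ C ⟶ 𝟙_ C) {A B : C} (f : A ⟶ B) :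
    ract s f = ract s (𝟙 A) ≫ f := by
  simp [ract, tensorHom_def']

lemma aux_ract_comp_id (s : 𝟙_ C ⟶ 𝟙_ C) {A B : C} (f : A ⟶ B) :
    ract s f = f ≫ ract s (𝟙 B) := by
  simp [ract, MonoidalCategory.tensorHom_def]

lemma aux_lact_unit (s : 𝟙_ C ⟶ 𝟙_ C) : lact s (𝟙 (𝟙_ C)) = s := by
  rw [lact, unitors_inv_equal, unitors_equal]; simp [MonoidalCategory.tensorHom_def]

lemma aux_ract_unit (s : 𝟙_ C ⟶ 𝟙_ C) : ract s (𝟙 (𝟙_ C)) = s := by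
  rw [ract, ← unitors_inv_equal, ← unitors_equal]; simp [tensorHom_def']

end Aux

/-- in a monoidal category with distributive finite monic coproducts,
a scalar `s` is central iff for every object `A` there is a scalar `t` with
`s·id_A = id_A·t`. -/
theorem stmt_13 [MonoidalCategory C] [HasInitial C]
    (hcop : ∀ A B : C, ∃ (P : C) (κA : A ⟶ P) (κB : B ⟶ P), IsCoproduct₂ A B P κA κB)
    (hmono : MonicCoproducts C) (hdist : DistribCoproducts C)
    (s : 𝟙_ C ⟶ 𝟙_ C) :
    Central s ↔ ∀ A : C, ∃ t : 𝟙_ C ⟶ 𝟙_ C, lact s (𝟙 A) = ract t (𝟙 A) := by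
  
  constructor
  · intro hc A
    exact ⟨s, hc (𝟙 A)⟩
  · intro h
    have key : ∀ X : C, lact s (𝟙 X) = ract s (𝟙 X) := by
      intro X
      obtain ⟨P, κX, κI, hP⟩ := hcop X (𝟙_ C)
      obtain ⟨mX, mI⟩ := hmono hP
      obtain ⟨t, ht⟩ := h P
      have hI : s ≫ κI = t ≫ κI := by
        have h1 : κI ≫ lact s (𝟙 P) = s ≫ κI := by
          rw [← aux_lact_comp_id, aux_lact_id_comp, aux_lact_unit]
        have h2 : κI ≫ ract t (𝟙 P) = t ≫ κI := by
          rw [← aux_ract_comp_id, aux_ract_id_comp, aux_ract_unit]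
        rw [← h1, ← h2, ht]
      have hts : s = t := (cancel_mono κI).mp hI
      have hX : lact s (𝟙 X) ≫ κX = ract t (𝟙 X) ≫ κX := by
        rw [← aux_lact_id_comp, ← aux_ract_id_comp, aux_lact_comp_id,
          aux_ract_comp_id, ht]
      rw [(cancel_mono κX).mp hX, ← hts]
    intro A B f
    rw [aux_lact_comp_id, key B, ← aux_ract_comp_id]
end

section
/- Let C be a category with zero morphisms, a zero object, and phased biproducts of every pair of objects. Then every phased coproduct (P, κ_A, κ_B) of objects A, B in C admits a unique pair of morphisms π_A : P → A, π_B : P → B making (P, κ_A, κ_B, π_A, π_B) a phased biproduct; in particular π_A is the unique morphism with π_A ∘ κ_A = id_A and π_A ∘ κ_B = 0, and similarly for π_B. -/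
open CategoryTheory CategoryTheory.Limits

universe v u

variable {C : Type u} [Category.{v} C]

/-- Binary phased product (dual to a binary phased coproduct). -/
structure IsPhasedProduct₂ (A B Q : C) (πA : Q ⟶ A) (πB : Q ⟶ B) : Prop where
  lift : ∀ {D : C} (f : D ⟶ A) (g : D ⟶ B), ∃ h : D ⟶ Q, h ≫ πA = f ∧ h ≫ πB = g
  phase : ∀ {D : C} (h h' : D ⟶ Q), h ≫ πA = h' ≫ πA → h ≫ πB = h' ≫ πB →
    ∃ U : Q ⟶ Q, (U ≫ πA = πA ∧ U ≫ πB = πB) ∧ h' = h ≫ U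

/-- Phased product of a family of objects. -/
structure IsPhasedProduct {ι : Type*} (A : ι → C) (Q : C) (π : ∀ i, Q ⟶ A i) : Prop where
  lift : ∀ {D : C} (f : ∀ i, D ⟶ A i), ∃ h : D ⟶ Q, ∀ i, h ≫ π i = f i
  phase : ∀ {D : C} (h h' : D ⟶ Q), (∀ i, h ≫ π i = h' ≫ π i) →
    ∃ U : Q ⟶ Q, (∀ i, U ≫ π i = π i) ∧ h' = h ≫ U

section ZeroMorphisms

variable [HasZeroMorphisms C]

/-- Binary phased biproduct: a simultaneous phased coproduct and phased product with
the usual biproduct equations, such that the coproduct and the product have the same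
phases. -/
structure IsPhasedBiproduct₂ (A B P : C) (κA : A ⟶ P) (κB : B ⟶ P)
    (πA : P ⟶ A) (πB : P ⟶ B) : Prop where
  κAπA : κA ≫ πA = 𝟙 A
  κBπB : κB ≫ πB = 𝟙 B
  κAπB : κA ≫ πB = 0
  κBπA : κB ≫ πA = 0
  coprod : IsPhasedCoproduct₂ A B P κA κB
  prod : IsPhasedProduct₂ A B P πA πB
  phases_eq : ∀ U : P ⟶ P,
    (κA ≫ U = κA ∧ κB ≫ U = κB) ↔ (U ≫ πA = πA ∧ U ≫ πB = πB)

/-- Phased biproduct of a family of objects. -/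
structure IsPhasedBiproduct {ι : Type*} (A : ι → C) (P : C)
    (κ : ∀ i, A i ⟶ P) (π : ∀ i, P ⟶ A i) : Prop where
  diag : ∀ i, κ i ≫ π i = 𝟙 (A i)
  offdiag : ∀ i j, i ≠ j → κ i ≫ π j = 0
  coprod : IsPhasedCoproduct A P κ
  prod : IsPhasedProduct A P π
  phases_eq : ∀ U : P ⟶ P, (∀ i, κ i ≫ U = κ i) ↔ (∀ i, U ≫ π i = π i)

end ZeroMorphisms

/-- in a category with zero morphisms, a zero object and binary phased
biproducts, every phased coproduct carries a unique phased biproduct structure; the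
projection `π_A` is the unique morphism with `π_A ∘ κ_A = id` and `π_A ∘ κ_B = 0`,
and similarly for `π_B`. -/
theorem stmt_16 [HasZeroMorphisms C] [HasZeroObject C]
    (hbip : ∀ A B : C, ∃ (P : C) (κA : A ⟶ P) (κB : B ⟶ P) (πA : P ⟶ A) (πB : P ⟶ B),
      IsPhasedBiproduct₂ A B P κA κB πA πB)
    {A B P : C} {κA : A ⟶ P} {κB : B ⟶ P} (h : IsPhasedCoproduct₂ A B P κA κB) :
    (∃! p : (P ⟶ A) × (P ⟶ B), IsPhasedBiproduct₂ A B P κA κB p.1 p.2) ∧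
    (∃! pA : P ⟶ A, κA ≫ pA = 𝟙 A ∧ κB ≫ pA = 0) ∧
    (∃! pB : P ⟶ B, κA ≫ pB = 0 ∧ κB ≫ pB = 𝟙 B) := by
  obtain ⟨P', κA', κB', πA', πB', hb⟩ := hbip A B
  obtain ⟨f, hfA, hfB⟩ := h.lift κA' κB'
  obtain ⟨s, hsA, hsB⟩ := hb.coprod.lift κA κB
  have hfsA : κA ≫ (f ≫ s) = κA := by rw [← Category.assoc, hfA, hsA]
  have hfsB : κB ≫ (f ≫ s) = κB := by rw [← Category.assoc, hfB, hsB]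
  obtain ⟨U₀, ⟨hU₀A, hU₀B⟩, hU₀⟩ := h.phase (f ≫ s) (𝟙 P)
    (by rw [hfsA, Category.comp_id]) (by rw [hfsB, Category.comp_id])
  obtain ⟨U₂, ⟨hU₂A, hU₂B⟩, hU₂⟩ := h.phase U₀ (𝟙 P)
    (by rw [hU₀A, Category.comp_id]) (by rw [hU₀B, Category.comp_id])
  have hfs₂ : f ≫ s = U₂ := by
    calc f ≫ s = (U₂ ≫ U₀) ≫ (f ≫ s) := by rw [← hU₂, Category.id_comp]
    _ = U₂ ≫ (U₀ ≫ (f ≫ s)) := by rw [Category.assoc]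
    _ = U₂ := by rw [← hU₀, Category.comp_id]
  have hinv : (f ≫ s) ≫ U₀ = 𝟙 P := by rw [hfs₂, ← hU₂]
  -- key lemmas: s ≫ p is forced
  have keyA : ∀ p : P ⟶ A, κA ≫ p = 𝟙 A → κB ≫ p = 0 → s ≫ p = πA' := by
    intro p h1 h2
    obtain ⟨W, ⟨hWA, hWB⟩, hW⟩ := hb.coprod.phase πA' (s ≫ p)
      (by rw [hb.κAπA, ← Category.assoc, hsA, h1])
      (by rw [hb.κBπA, ← Category.assoc, hsB, h2])
    rw [hW, ((hb.phases_eq W).mp ⟨hWA, hWB⟩).1]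
  have keyB : ∀ p : P ⟶ B, κA ≫ p = 0 → κB ≫ p = 𝟙 B → s ≫ p = πB' := by
    intro p h1 h2
    obtain ⟨W, ⟨hWA, hWB⟩, hW⟩ := hb.coprod.phase πB' (s ≫ p)
      (by rw [hb.κAπB, ← Category.assoc, hsA, h1])
      (by rw [hb.κBπB, ← Category.assoc, hsB, h2])
    rw [hW, ((hb.phases_eq W).mp ⟨hWA, hWB⟩).2]
  set pA : P ⟶ A := f ≫ πA' with hpA
  set pB : P ⟶ B := f ≫ πB' with hpB
  have eApA : κA ≫ pA = 𝟙 A := by rw [hpA, ← Category.assoc, hfA, hb.κAπA]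
  have eBpA : κB ≫ pA = 0 := by rw [hpA, ← Category.assoc, hfB, hb.κBπA]
  have eApB : κA ≫ pB = 0 := by rw [hpB, ← Category.assoc, hfA, hb.κAπB]
  have eBpB : κB ≫ pB = 𝟙 B := by rw [hpB, ← Category.assoc, hfB, hb.κBπB]
  have uniqA : ∀ p : P ⟶ A, κA ≫ p = 𝟙 A → κB ≫ p = 0 → p = pA := by
    intro p h1 h2
    have e : ∀ q : P ⟶ A, κA ≫ q = 𝟙 A → κB ≫ q = 0 → q = U₀ ≫ f ≫ πA' := by
      intro q h1 h2
      calc q = (𝟙 P) ≫ q := (Category.id_comp q).symm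
      _ = U₀ ≫ f ≫ s ≫ q := by rw [hU₀]; simp only [Category.assoc]
      _ = U₀ ≫ f ≫ πA' := by rw [keyA q h1 h2]
    rw [e p h1 h2, ← e pA eApA eBpA]
  have uniqB : ∀ p : P ⟶ B, κA ≫ p = 0 → κB ≫ p = 𝟙 B → p = pB := by
    intro p h1 h2
    have e : ∀ q : P ⟶ B, κA ≫ q = 0 → κB ≫ q = 𝟙 B → q = U₀ ≫ f ≫ πB' := by
      intro q h1 h2
      calc q = (𝟙 P) ≫ q := (Category.id_comp q).symm
      _ = U₀ ≫ f ≫ s ≫ q := by rw [hU₀]; simp only [Category.assoc]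
      _ = U₀ ≫ f ≫ πB' := by rw [keyB q h1 h2]
    rw [e p h1 h2, ← e pB eApB eBpB]
  have spA : s ≫ pA = πA' := keyA pA eApA eBpA
  have spB : s ≫ pB = πB' := keyB pB eApB eBpB
  -- phases fix pA, pB
  have fixA : ∀ U : P ⟶ P, κA ≫ U = κA → κB ≫ U = κB → U ≫ pA = pA := by
    intro U e1 e2
    exact uniqA (U ≫ pA) (by rw [← Category.assoc, e1, eApA])
      (by rw [← Category.assoc, e2, eBpA])
  have fixB : ∀ U : P ⟶ P, κA ≫ U = κA → κB ≫ U = κB → U ≫ pB = pB := by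
    intro U e1 e2
    exact uniqB (U ≫ pB) (by rw [← Category.assoc, e1, eApB])
      (by rw [← Category.assoc, e2, eBpB])
  -- the product structure
  have hprod : IsPhasedProduct₂ A B P pA pB := by
    constructor
    · intro D f' g'
      obtain ⟨k, hk1, hk2⟩ := hb.prod.lift f' g'
      exact ⟨k ≫ s, by rw [Category.assoc, spA, hk1], by rw [Category.assoc, spB, hk2]⟩
    · intro D h1 h2 e1 e2
      obtain ⟨V, ⟨hV1, hV2⟩, hV⟩ := hb.prod.phase (h1 ≫ f) (h2 ≫ f)
        (by simp only [Category.assoc, ← hpA]; exact e1)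
        (by simp only [Category.assoc, ← hpB]; exact e2)
      refine ⟨f ≫ V ≫ s ≫ U₀, ⟨?_, ?_⟩, ?_⟩
      · have : U₀ ≫ pA = pA := fixA U₀ hU₀A hU₀B
        calc (f ≫ V ≫ s ≫ U₀) ≫ pA = f ≫ V ≫ s ≫ (U₀ ≫ pA) := by
              simp only [Category.assoc]
        _ = f ≫ V ≫ πA' := by rw [this, spA]
        _ = f ≫ πA' := by rw [hV1]
      · have : U₀ ≫ pB = pB := fixB U₀ hU₀A hU₀B
        calc (f ≫ V ≫ s ≫ U₀) ≫ pB = f ≫ V ≫ s ≫ (U₀ ≫ pB) := by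
              simp only [Category.assoc]
        _ = f ≫ V ≫ πB' := by rw [this, spB]
        _ = f ≫ πB' := by rw [hV2]
      · calc h2 = h2 ≫ 𝟙 P := (Category.comp_id h2).symm
        _ = h2 ≫ (f ≫ s) ≫ U₀ := by rw [hinv]
        _ = (h2 ≫ f) ≫ s ≫ U₀ := by simp only [Category.assoc]
        _ = ((h1 ≫ f) ≫ V) ≫ s ≫ U₀ := by rw [hV]
        _ = h1 ≫ f ≫ V ≫ s ≫ U₀ := by simp only [Category.assoc]
  -- phases_eq
  have hphases : ∀ U : P ⟶ P,
      (κA ≫ U = κA ∧ κB ≫ U = κB) ↔ (U ≫ pA = pA ∧ U ≫ pB = pB) := by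
    intro U
    constructor
    · rintro ⟨e1, e2⟩
      exact ⟨fixA U e1 e2, fixB U e1 e2⟩
    · rintro ⟨e1, e2⟩
      have cA : κA ≫ U ≫ f = κA' := by
        obtain ⟨V, ⟨hV1, hV2⟩, hV⟩ := hb.prod.phase κA' (κA ≫ U ≫ f)
          (by rw [hb.κAπA, Category.assoc, Category.assoc, ← hpA, e1, eApA])
          (by rw [hb.κAπB, Category.assoc, Category.assoc, ← hpB, e2, eApB])
        rw [hV, ((hb.phases_eq V).mpr ⟨hV1, hV2⟩).1]
      have cB : κB ≫ U ≫ f = κB' := by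
        obtain ⟨V, ⟨hV1, hV2⟩, hV⟩ := hb.prod.phase κB' (κB ≫ U ≫ f)
          (by rw [hb.κBπA, Category.assoc, Category.assoc, ← hpA, e1, eBpA])
          (by rw [hb.κBπB, Category.assoc, Category.assoc, ← hpB, e2, eBpB])
        rw [hV, ((hb.phases_eq V).mpr ⟨hV1, hV2⟩).2]
      obtain ⟨W, ⟨hW1, hW2⟩, hW⟩ := h.phase f (U ≫ f)
        (by rw [hfA, cA]) (by rw [hfB, cB])
      have hUW : U = W := by
        calc U = U ≫ (f ≫ s) ≫ U₀ := by rw [hinv, Category.comp_id]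
        _ = (U ≫ f) ≫ s ≫ U₀ := by simp only [Category.assoc]
        _ = (W ≫ f) ≫ s ≫ U₀ := by rw [hW]
        _ = W ≫ (f ≫ s) ≫ U₀ := by simp only [Category.assoc]
        _ = W := by rw [hinv, Category.comp_id]
      rw [hUW]
      exact ⟨hW1, hW2⟩
  have hbi : IsPhasedBiproduct₂ A B P κA κB pA pB :=
    ⟨eApA, eBpB, eApB, eBpA, h, hprod, hphases⟩
  refine ⟨⟨(pA, pB), hbi, ?_⟩, ⟨pA, ⟨eApA, eBpA⟩, fun p hp => uniqA p hp.1 hp.2⟩,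
    ⟨pB, ⟨eApB, eBpB⟩, fun p hp => uniqB p hp.1 hp.2⟩⟩
  rintro ⟨q1, q2⟩ hq
  have h1 : q1 = pA := uniqA q1 hq.κAπA hq.κBπA
  have h2 : q2 = pB := uniqB q2 hq.κAπB hq.κBπB
  simp [h1, h2]
end

section
/- Let C be a category with zero morphisms, a zero object, and phased biproducts of every pair of objects. Then all phased coproducts in C have transitive phases: for every diagonal morphism f : A +̇ B → C +̇ D between phased coproducts and every phase U of A +̇ B, there is a phase V of C +̇ D with f ∘ U = V ∘ f. -/
open CategoryTheory CategoryTheory.Limits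

universe v u

variable {C : Type u} [Category.{v} C]

/-- Every phase of a binary phased coproduct is an isomorphism, with inverse a phase. -/
lemma phase_inv_aux {A B P : C} {κA : A ⟶ P} {κB : B ⟶ P}
    (hc : IsPhasedCoproduct₂ A B P κA κB)
    (U : P ⟶ P) (h1 : κA ≫ U = κA) (h2 : κB ≫ U = κB) :
    ∃ W : P ⟶ P, (κA ≫ W = κA ∧ κB ≫ W = κB) ∧ U ≫ W = 𝟙 P ∧ W ≫ U = 𝟙 P := by
  obtain ⟨W, hW, hWU⟩ := hc.phase U (𝟙 P) (by simp [h1]) (by simp [h2])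
  obtain ⟨W₂, hW₂, hW₂W⟩ := hc.phase W (𝟙 P) (by simp [hW.1]) (by simp [hW.2])
  have hW₂U : W₂ = U := by
    calc W₂ = W₂ ≫ (W ≫ U) := by rw [← hWU, Category.comp_id]
    _ = (W₂ ≫ W) ≫ U := by rw [Category.assoc]
    _ = U := by rw [← hW₂W, Category.id_comp]
  exact ⟨W, hW, by rw [← hW₂U]; exact hW₂W.symm, hWU.symm⟩

/-- Transitivity of phases for diagonal morphisms between phased biproducts. -/
lemma bip_trans_aux [HasZeroMorphisms C] {A B P : C} {ι₁ : A ⟶ P} {ι₂ : B ⟶ P}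
    {p₁ : P ⟶ A} {p₂ : P ⟶ B}
    {A' B' Q : C} {j₁ : A' ⟶ Q} {j₂ : B' ⟶ Q} {q₁ : Q ⟶ A'} {q₂ : Q ⟶ B'}
    (h1 : IsPhasedBiproduct₂ A B P ι₁ ι₂ p₁ p₂)
    (h2 : IsPhasedBiproduct₂ A' B' Q j₁ j₂ q₁ q₂)
    (f : P ⟶ Q) (g : A ⟶ A') (hgf : ι₁ ≫ f = g ≫ j₁)
    (k : B ⟶ B') (hkf : ι₂ ≫ f = k ≫ j₂)
    (U : P ⟶ P) (hU1 : ι₁ ≫ U = ι₁) (hU2 : ι₂ ≫ U = ι₂) :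
    ∃ V : Q ⟶ Q, (j₁ ≫ V = j₁ ∧ j₂ ≫ V = j₂) ∧ U ≫ f = f ≫ V := by
  have hUp := (h1.phases_eq U).1 ⟨hU1, hU2⟩
  have key1 : f ≫ q₁ = p₁ ≫ g := by
    obtain ⟨W, hW, hWe⟩ := h1.coprod.phase (p₁ ≫ g) (f ≫ q₁)
      (by rw [← Category.assoc, ← Category.assoc, h1.κAπA, hgf, Category.assoc,
            h2.κAπA, Category.id_comp, Category.comp_id])
      (by rw [← Category.assoc, ← Category.assoc, h1.κBπA, hkf, Category.assoc,
            h2.κBπA, zero_comp, comp_zero])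
    have hWp := (h1.phases_eq W).1 hW
    rw [hWe, ← Category.assoc, hWp.1]
  have key2 : f ≫ q₂ = p₂ ≫ k := by
    obtain ⟨W, hW, hWe⟩ := h1.coprod.phase (p₂ ≫ k) (f ≫ q₂)
      (by rw [← Category.assoc, ← Category.assoc, h1.κAπB, hgf, Category.assoc,
            h2.κAπB, zero_comp, comp_zero])
      (by rw [← Category.assoc, ← Category.assoc, h1.κBπB, hkf, Category.assoc,
            h2.κBπB, Category.id_comp, Category.comp_id])
    have hWp := (h1.phases_eq W).1 hW
    rw [hWe, ← Category.assoc, hWp.2]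
  obtain ⟨V, hV, hfV⟩ := h2.prod.phase f (U ≫ f)
    (by rw [Category.assoc, key1, ← Category.assoc, hUp.1])
    (by rw [Category.assoc, key2, ← Category.assoc, hUp.2])
  exact ⟨V, (h2.phases_eq V).2 hV, hfV⟩

/-- in a category with zero morphisms, a zero object and binary phased
biproducts, all phased coproducts have transitive phases. -/
theorem stmt_17 [HasZeroMorphisms C] [HasZeroObject C]
    (hbip : ∀ A B : C, ∃ (P : C) (κA : A ⟶ P) (κB : B ⟶ P) (πA : P ⟶ A) (πB : P ⟶ B),
      IsPhasedBiproduct₂ A B P κA κB πA πB) :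
    PhasesTransitive C := by
  intro A B P κA κB A' B' P' κA' κB' hP hP' f hgex hhex U hUA hUB
  obtain ⟨g, hg⟩ := hgex
  obtain ⟨h, hh⟩ := hhex
  obtain ⟨P₁, ι₁, ι₂, p₁, p₂, hB1⟩ := hbip A B
  obtain ⟨Q₁, j₁, j₂, q₁, q₂, hB2⟩ := hbip A' B'
  obtain ⟨s, hs1, hs2⟩ := hP.lift ι₁ ι₂
  obtain ⟨e, he1, he2⟩ := hB1.coprod.lift κA κB
  obtain ⟨m, hm1, hm2⟩ := hP'.lift j₁ j₂
  obtain ⟨n, hn1, hn2⟩ := hB2.coprod.lift κA' κB'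
  -- φ := s ≫ e is a phase of P
  have hφ1 : κA ≫ (s ≫ e) = κA := by rw [← Category.assoc, hs1, he1]
  have hφ2 : κB ≫ (s ≫ e) = κB := by rw [← Category.assoc, hs2, he2]
  obtain ⟨φ', hφ'ph, hφφ', hφ'φ⟩ := phase_inv_aux hP (s ≫ e) hφ1 hφ2
  -- ψ := m ≫ n is a phase of P'
  have hψ1 : κA' ≫ (m ≫ n) = κA' := by rw [← Category.assoc, hm1, hn1]
  have hψ2 : κB' ≫ (m ≫ n) = κB' := by rw [← Category.assoc, hm2, hn2]
  obtain ⟨ψ', hψ'ph, hψψ', hψ'ψ⟩ := phase_inv_aux hP' (m ≫ n) hψ1 hψ2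
  -- Ũ := U ≫ φ' is a phase of P with Ũ ≫ (s ≫ e) = U
  set Ut : P ⟶ P := U ≫ φ' with hUt
  have hUt1 : κA ≫ Ut = κA := by rw [hUt, ← Category.assoc, hUA, hφ'ph.1]
  have hUt2 : κB ≫ Ut = κB := by rw [hUt, ← Category.assoc, hUB, hφ'ph.2]
  have hUtφ : Ut ≫ (s ≫ e) = U := by
    rw [hUt, Category.assoc, hφ'φ, Category.comp_id]
  -- U₁ := e ≫ Ũ ≫ s is a phase of P₁
  have hU1a : ι₁ ≫ (e ≫ Ut ≫ s) = ι₁ := by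
    rw [← Category.assoc, he1, ← Category.assoc, hUt1, hs1]
  have hU1b : ι₂ ≫ (e ≫ Ut ≫ s) = ι₂ := by
    rw [← Category.assoc, he2, ← Category.assoc, hUt2, hs2]
  -- f₁ := e ≫ f ≫ m is diagonal between the biproducts
  have hf1a : ι₁ ≫ (e ≫ f ≫ m) = g ≫ j₁ := by
    rw [← Category.assoc, he1, ← Category.assoc, hg, Category.assoc, hm1]
  have hf1b : ι₂ ≫ (e ≫ f ≫ m) = h ≫ j₂ := by
    rw [← Category.assoc, he2, ← Category.assoc, hh, Category.assoc, hm2]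
  obtain ⟨V₁, hV₁, hV₁eq⟩ := bip_trans_aux hB1 hB2 (e ≫ f ≫ m) g hf1a h hf1b
    (e ≫ Ut ≫ s) hU1a hU1b
  -- hV₁eq : (e ≫ Ut ≫ s) ≫ (e ≫ f ≫ m) = (e ≫ f ≫ m) ≫ V₁
  -- cancel e on the left using the left inverse φ' ≫ s of e
  have hre : (φ' ≫ s) ≫ e = 𝟙 P := by rw [Category.assoc, hφ'φ]
  have hmain : U ≫ f ≫ m = f ≫ m ≫ V₁ := by
    have := congrArg (fun x => (φ' ≫ s) ≫ x) hV₁eq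
    calc U ≫ f ≫ m = ((φ' ≫ s) ≫ e) ≫ U ≫ f ≫ m := by rw [hre, Category.id_comp]
    _ = (φ' ≫ s) ≫ e ≫ (Ut ≫ (s ≫ e)) ≫ f ≫ m := by
        rw [hUtφ]; simp only [Category.assoc]
    _ = (φ' ≫ s) ≫ (e ≫ Ut ≫ s) ≫ (e ≫ f ≫ m) := by simp only [Category.assoc]
    _ = (φ' ≫ s) ≫ (e ≫ f ≫ m) ≫ V₁ := by rw [hV₁eq]
    _ = ((φ' ≫ s) ≫ e) ≫ f ≫ m ≫ V₁ := by simp only [Category.assoc]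
    _ = f ≫ m ≫ V₁ := by rw [hre, Category.id_comp]
  -- V := m ≫ V₁ ≫ n ≫ ψ' is the required phase of P'
  refine ⟨m ≫ V₁ ≫ n ≫ ψ', ⟨?_, ?_⟩, ?_⟩
  · rw [← Category.assoc, hm1, ← Category.assoc, hV₁.1, ← Category.assoc, hn1, hψ'ph.1]
  · rw [← Category.assoc, hm2, ← Category.assoc, hV₁.2, ← Category.assoc, hn2, hψ'ph.2]
  · -- U ≫ f = f ≫ m ≫ V₁ ≫ n ≫ ψ'
    calc U ≫ f = ((U ≫ f) ≫ m ≫ n) ≫ ψ' := by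
          rw [Category.assoc, hψψ', Category.comp_id]
    _ = (U ≫ f ≫ m) ≫ n ≫ ψ' := by simp only [Category.assoc]
    _ = (f ≫ m ≫ V₁) ≫ n ≫ ψ' := by rw [hmain]
    _ = f ≫ m ≫ V₁ ≫ n ≫ ψ' := by simp only [Category.assoc]
end
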